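/- arXiv:2510.13295 — 8 statements merged into one kernel-verified Lean document; each statement's English description precedes it below -/
import Mathlib

section
/- For every admissible composition (s_1,…,s_r) (i.e. s_1 ≥ 2), the multiple polylogarithm Li_{s_1,…,s_r}(z) tends to the multiple zeta value ζ(s_1,…,s_r) as the real variable z tends to 1 from below. -/
/-- The multiple polylogarithm `Li_{s_1,…,s_r}(z) = Σ_{n_1>…>n_r>0} z^{n_1}/(n_1^{s_1}⋯n_r^{s_r})`,
for a (nonempty) composition `s : Fin (r+1) → ℕ`. -/
noncomputable def Li {r : ℕ} (s : Fin (r + 1) → ℕ) (z : ℝ) : ℝ :=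
  ∑' f : {f : Fin (r + 1) → ℕ // StrictAnti f ∧ ∀ i, 0 < f i},
    z ^ (f.1 0) * ∏ i, (1 : ℝ) / (f.1 i : ℝ) ^ (s i)

/-- The multiple zeta value `ζ(s_1,…,s_r) = Σ_{n_1>…>n_r>0} 1/(n_1^{s_1}⋯n_r^{s_r})`. -/
noncomputable def mzeta {r : ℕ} (s : Fin (r + 1) → ℕ) : ℝ :=
  ∑' f : {f : Fin (r + 1) → ℕ // StrictAnti f ∧ ∀ i, 0 < f i},
    ∏ i, (1 : ℝ) / (f.1 i : ℝ) ^ (s i)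

/-- Summability of products of a summable nonneg function over finite tuples. -/
lemma summable_pi_prod {g : ℕ → ℝ} (hg : Summable g) (h0 : ∀ k, 0 ≤ g k) (n : ℕ) :
    Summable (fun f : Fin n → ℕ => ∏ i, g (f i)) := by
  induction n with
  | zero =>
      have : (fun f : Fin 0 → ℕ => ∏ i, g (f i)) = fun _ => 1 := by
        funext f; simp
      rw [this]
      exact summable_of_finite_support (Set.toFinite _)
  | succ n ih =>
      have hmul : Summable (fun p : ℕ × (Fin n → ℕ) => g p.1 * ∏ i, g (p.2 i)) := by
        apply Summable.mul_of_nonneg hg ih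
        · exact h0
        · exact fun f => Finset.prod_nonneg fun i _ => h0 _
      have heq : (fun p : ℕ × (Fin n → ℕ) => g p.1 * ∏ i, g (p.2 i)) =
          (fun f : Fin (n + 1) → ℕ => ∏ i, g (f i)) ∘
            (Fin.consEquiv (fun _ : Fin (n + 1) => ℕ)) := by
        funext p
        simp only [Function.comp_apply, Fin.consEquiv_apply]
        rw [Fin.prod_univ_succ]
        simp [Fin.cons_zero, Fin.cons_succ]
      rw [heq] at hmul
      exact ((Fin.consEquiv (fun _ : Fin (n + 1) => ℕ)).summable_iff).mp hmul

/-- for every admissible composition `(s_1,…,s_r)` (i.e. `s_1 ≥ 2`),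
`Li_{s_1,…,s_r}(z) → ζ(s_1,…,s_r)` as the real variable `z` tends to `1` from below. -/
theorem tendsto_Li_mzeta (r : ℕ) (s : Fin (r + 1) → ℕ)
    (hs : ∀ i, 0 < s i) (hadm : 2 ≤ s 0) :
    Filter.Tendsto (fun z : ℝ => Li s z) (nhdsWithin 1 (Set.Iio 1)) (nhds (mzeta s)) := by
  classical
  set ε : ℝ := 1 / (r + 1) with hε
  have hεpos : 0 < ε := by positivity
  set p : ℝ := -(1 + ε) with hp
  have hplt : p < -1 := by simp only [hp]; linarith
  -- the dominating bound
  set S := {f : Fin (r + 1) → ℕ // StrictAnti f ∧ ∀ i, 0 < f i}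
  set bound : S → ℝ := fun f => ∏ i, ((f.1 i : ℝ)) ^ p with hbound
  -- summability of the bound
  have hgsum : Summable (fun k : ℕ => (k : ℝ) ^ p) := Real.summable_nat_rpow.mpr hplt
  have hgnn : ∀ k : ℕ, (0 : ℝ) ≤ (k : ℝ) ^ p := fun k => Real.rpow_nonneg (by positivity) _
  have hsum : Summable bound := by
    have := (summable_pi_prod hgsum hgnn (r + 1)).subtype
      {f : Fin (r + 1) → ℕ | StrictAnti f ∧ ∀ i, 0 < f i}
    exact this
  -- key domination inequality
  have key : ∀ f : S, (∏ i, (1 : ℝ) / (f.1 i : ℝ) ^ (s i)) ≤ bound f := by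
    intro ⟨f, hanti, hposf⟩
    have ha1 : ∀ i, (1 : ℝ) ≤ (f i : ℝ) := fun i => by
      exact_mod_cast hposf i
    have hapos : ∀ i, (0 : ℝ) < (f i : ℝ) := fun i => lt_of_lt_of_le one_pos (ha1 i)
    have hle0 : ∀ i, (f i : ℝ) ≤ (f 0 : ℝ) := by
      intro i
      exact_mod_cast hanti.antitone (Fin.zero_le i)
    -- (∏ a_i)^ε ≤ a_0
    have hprodle : (∏ i, (f i : ℝ)) ≤ (f 0 : ℝ) ^ (r + 1 : ℕ) := by
      calc (∏ i, (f i : ℝ)) ≤ ∏ _i : Fin (r + 1), (f 0 : ℝ) :=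
            Finset.prod_le_prod (fun i _ => (hapos i).le) (fun i _ => hle0 i)
        _ = (f 0 : ℝ) ^ (r + 1 : ℕ) := by simp
    have hεa0 : (∏ i, (f i : ℝ)) ^ ε ≤ (f 0 : ℝ) := by
      have h1 : (∏ i, (f i : ℝ)) ^ ε ≤ ((f 0 : ℝ) ^ (r + 1 : ℕ)) ^ ε :=
        Real.rpow_le_rpow (Finset.prod_nonneg fun i _ => (hapos i).le) hprodle hεpos.le
      have h2 : ((f 0 : ℝ) ^ (r + 1 : ℕ)) ^ ε = (f 0 : ℝ) := by
        rw [← Real.rpow_natCast (f 0 : ℝ) (r + 1), ← Real.rpow_mul (hapos 0).le]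
        have : ((r + 1 : ℕ) : ℝ) * ε = 1 := by
          push_cast [hε]
          field_simp
        rw [this, Real.rpow_one]
      linarith
    -- ∏ a_i^{1+ε} ≤ ∏ a_i^{s_i}
    have hmain : (∏ i, (f i : ℝ) ^ (1 + ε)) ≤ ∏ i, (f i : ℝ) ^ (s i) := by
      have lhs_eq : (∏ i, (f i : ℝ) ^ (1 + ε)) = (∏ i, (f i : ℝ)) * (∏ i, (f i : ℝ)) ^ ε := by
        rw [← Real.finset_prod_rpow _ _ (fun i _ => (hapos i).le)]
        rw [← Finset.prod_mul_distrib]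
        refine Finset.prod_congr rfl fun i _ => ?_
        rw [Real.rpow_add (hapos i), Real.rpow_one]
      have rhs_ge : ((f 0 : ℝ)) * (∏ i, (f i : ℝ)) ≤ ∏ i, (f i : ℝ) ^ (s i) := by
        have step : (∏ i, (f i : ℝ) * (if i = 0 then (f 0 : ℝ) else 1)) ≤
            ∏ i, (f i : ℝ) ^ (s i) := by
          refine Finset.prod_le_prod (fun i _ => ?_) (fun i _ => ?_)
          · positivity
          · by_cases h : i = 0
            · subst h
              simp only [if_pos rfl]
              calc (f 0 : ℝ) * (f 0 : ℝ) = (f 0 : ℝ) ^ (2 : ℕ) := by ring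
                _ ≤ (f 0 : ℝ) ^ (s 0) := pow_le_pow_right₀ (ha1 0) hadm
            · simp only [if_neg h, mul_one]
              calc (f i : ℝ) = (f i : ℝ) ^ (1 : ℕ) := (pow_one _).symm
                _ ≤ (f i : ℝ) ^ (s i) := pow_le_pow_right₀ (ha1 i) (hs i)
        calc ((f 0 : ℝ)) * (∏ i, (f i : ℝ))
            = ∏ i, (f i : ℝ) * (if i = 0 then (f 0 : ℝ) else 1) := by
              rw [Finset.prod_mul_distrib, Finset.prod_ite_eq' Finset.univ 0
                (fun _ => (f 0 : ℝ))]
              simp [mul_comm]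
          _ ≤ ∏ i, (f i : ℝ) ^ (s i) := step
      calc (∏ i, (f i : ℝ) ^ (1 + ε)) = (∏ i, (f i : ℝ)) * (∏ i, (f i : ℝ)) ^ ε := lhs_eq
        _ ≤ (∏ i, (f i : ℝ)) * (f 0 : ℝ) := by
            refine mul_le_mul_of_nonneg_left hεa0 ?_
            exact Finset.prod_nonneg fun i _ => (hapos i).le
        _ = ((f 0 : ℝ)) * (∏ i, (f i : ℝ)) := mul_comm _ _
        _ ≤ ∏ i, (f i : ℝ) ^ (s i) := rhs_ge
    -- conclude
    have hL : (∏ i, (1 : ℝ) / (f i : ℝ) ^ (s i)) = (∏ i, (f i : ℝ) ^ (s i))⁻¹ := by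
      rw [← Finset.prod_inv_distrib]
      exact Finset.prod_congr rfl fun i _ => one_div _
    have hR : (bound ⟨f, hanti, hposf⟩ : ℝ) = (∏ i, (f i : ℝ) ^ (1 + ε))⁻¹ := by
      simp only [hbound, hp]
      rw [← Finset.prod_inv_distrib]
      exact Finset.prod_congr rfl fun i _ => by
        rw [← Real.rpow_neg (hapos i).le]
    rw [hL, hR]
    exact inv_anti₀ (Finset.prod_pos fun i _ =>
      Real.rpow_pos_of_pos (hapos i) _) hmain
  have keynn : ∀ f : S, (0 : ℝ) ≤ ∏ i, (1 : ℝ) / (f.1 i : ℝ) ^ (s i) := by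
    intro ⟨f, hanti, hposf⟩
    exact Finset.prod_nonneg fun i _ => by positivity
  -- apply dominated convergence
  have main := tendsto_tsum_of_dominated_convergence (𝓕 := nhdsWithin 1 (Set.Iio 1))
    (f := fun (z : ℝ) (k : S) => z ^ (k.1 0) * ∏ i, (1 : ℝ) / (k.1 i : ℝ) ^ (s i))
    (g := fun k : S => ∏ i, (1 : ℝ) / (k.1 i : ℝ) ^ (s i))
    (bound := bound) hsum
    (by
      intro k
      have hc : Filter.Tendsto (fun z : ℝ => z ^ (k.1 0) * ∏ i, (1 : ℝ) / (k.1 i : ℝ) ^ (s i))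
          (nhds 1) (nhds ((1 : ℝ) ^ (k.1 0) * ∏ i, (1 : ℝ) / (k.1 i : ℝ) ^ (s i))) := by
        exact (Continuous.mul (continuous_pow _) continuous_const).tendsto 1
      simpa using hc.mono_left nhdsWithin_le_nhds)
    (by
      filter_upwards [Ioo_mem_nhdsLT (by norm_num : (0 : ℝ) < 1)] with z hz k
      have hz0 : 0 ≤ z := hz.1.le
      have hz1 : z ≤ 1 := hz.2.le
      have hpow : z ^ (k.1 0) ≤ 1 := pow_le_one₀ hz0 hz1
      have hpow0 : 0 ≤ z ^ (k.1 0) := pow_nonneg hz0 _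
      rw [Real.norm_eq_abs, abs_mul, abs_of_nonneg hpow0, abs_of_nonneg (keynn k)]
      calc z ^ (k.1 0) * (∏ i, (1 : ℝ) / (k.1 i : ℝ) ^ (s i))
          ≤ 1 * (∏ i, (1 : ℝ) / (k.1 i : ℝ) ^ (s i)) :=
            mul_le_mul_of_nonneg_right hpow (keynn k)
        _ = ∏ i, (1 : ℝ) / (k.1 i : ℝ) ^ (s i) := one_mul _
        _ ≤ bound k := key k)
  exact main
end

section
/- Euler's identity: ζ(2,1) = ζ(3), i.e. Σ_{m>n>0} 1/(m²·n) = Σ_{m≥1} 1/m³. -/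
open Finset Filter Topology

noncomputable def Hh (m : ℕ) : ℝ := ∑ k ∈ Finset.range m, 1 / ((k : ℝ) + 1)

noncomputable def tF (p : ℕ × ℕ) : ℝ := 1 / (((p.1:ℝ)+(p.2:ℝ)+2)^2 * ((p.1:ℝ)+1))
noncomputable def gF (p : ℕ × ℕ) : ℝ := 1 / ((((p.1:ℝ)+1) * ((p.2:ℝ)+1)) * ((p.1:ℝ)+(p.2:ℝ)+2))
noncomputable def wF (p : ℕ × ℕ) : ℝ := if p.2 < p.1 then 1 / (((p.1:ℝ)+1)^2 * ((p.2:ℝ)+1)) else 0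

lemma summable_aux : Summable (fun n : ℕ => 1 / (((n:ℝ)+1) * Real.sqrt ((n:ℝ)+1))) := by
  have h : Summable (fun n : ℕ => 1 / ((n:ℝ) ^ (3/2 : ℝ))) :=
    Real.summable_one_div_nat_rpow.2 (by norm_num)
  have h2 := (summable_nat_add_iff 1).2 h
  refine h2.congr fun n => ?_
  have hp : ((n:ℝ)+1) ^ (3/2 : ℝ) = ((n:ℝ)+1) * Real.sqrt ((n:ℝ)+1) := by
    rw [show (3/2 : ℝ) = 1 + 1/2 by norm_num,
      Real.rpow_add (by positivity), Real.rpow_one,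
      ← Real.sqrt_eq_rpow]
  push_cast
  rw [hp]

lemma sqrt_bound (a b : ℕ) :
    Real.sqrt ((a:ℝ)+1) * Real.sqrt ((b:ℝ)+1) ≤ (a:ℝ)+(b:ℝ)+2 := by
  rw [← Real.sqrt_mul (by positivity)]
  calc Real.sqrt (((a:ℝ)+1) * ((b:ℝ)+1)) ≤ Real.sqrt (((a:ℝ)+(b:ℝ)+2)^2) := by
        apply Real.sqrt_le_sqrt; nlinarith [Nat.cast_nonneg (α := ℝ) a, Nat.cast_nonneg (α := ℝ) b]
    _ = (a:ℝ)+(b:ℝ)+2 := Real.sqrt_sq (by positivity)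

lemma summable_gF : Summable gF := by
  have hmaj : Summable (fun p : ℕ × ℕ => (1 / (((p.1:ℝ)+1) * Real.sqrt ((p.1:ℝ)+1))) *
      (1 / (((p.2:ℝ)+1) * Real.sqrt ((p.2:ℝ)+1)))) :=
    summable_aux.mul_of_nonneg summable_aux (fun n => by positivity) (fun n => by positivity)
  refine Summable.of_nonneg_of_le (fun p => by unfold gF; positivity) (fun p => ?_) hmaj
  obtain ⟨a, b⟩ := p
  unfold gF
  rw [div_mul_div_comm, one_mul]
  apply one_div_le_one_div_of_le (by positivity)
  simp only
  calc ((a:ℝ)+1) * Real.sqrt ((a:ℝ)+1) * (((b:ℝ)+1) * Real.sqrt ((b:ℝ)+1))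
      = (((a:ℝ)+1) * ((b:ℝ)+1)) * (Real.sqrt ((a:ℝ)+1) * Real.sqrt ((b:ℝ)+1)) := by ring
    _ ≤ (((a:ℝ)+1) * ((b:ℝ)+1)) * ((a:ℝ)+(b:ℝ)+2) :=
        mul_le_mul_of_nonneg_left (sqrt_bound a b) (by positivity)

lemma summable_tF : Summable tF := by
  apply Summable.of_nonneg_of_le (fun p => by unfold tF; positivity) (fun p => ?_) summable_gF
  obtain ⟨a, b⟩ := p
  unfold tF gF
  apply one_div_le_one_div_of_le (by positivity)
  have h1 : (0:ℝ) ≤ (a:ℝ) + 1 := by positivity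
  have h2 : (0:ℝ) ≤ (a:ℝ) + (b:ℝ) + 2 := by positivity
  nlinarith [mul_nonneg (mul_nonneg h1 h1) h2]

lemma summable_wF : Summable wF := by
  have hmaj : Summable (fun p : ℕ × ℕ => (1 / (((p.1:ℝ)+1) * Real.sqrt ((p.1:ℝ)+1))) *
      (1 / (((p.2:ℝ)+1) * Real.sqrt ((p.2:ℝ)+1)))) :=
    summable_aux.mul_of_nonneg summable_aux (fun n => by positivity) (fun n => by positivity)
  refine Summable.of_nonneg_of_le (fun p => by unfold wF; positivity) (fun p => ?_) hmaj
  obtain ⟨a, b⟩ := p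
  unfold wF
  simp only
  split_ifs with h
  · rw [div_mul_div_comm, one_mul]
    apply one_div_le_one_div_of_le (by positivity)
    have hba : (b:ℝ) + 1 ≤ (a:ℝ) + 1 := by exact_mod_cast Nat.succ_le_succ h.le
    have hsq : Real.sqrt ((a:ℝ)+1) * Real.sqrt ((b:ℝ)+1) ≤ (a:ℝ)+1 := by
      rw [← Real.sqrt_mul (by positivity)]
      calc Real.sqrt (((a:ℝ)+1) * ((b:ℝ)+1)) ≤ Real.sqrt (((a:ℝ)+1)^2) := by
            apply Real.sqrt_le_sqrt; nlinarith [Nat.cast_nonneg (α := ℝ) b]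
        _ = (a:ℝ)+1 := Real.sqrt_sq (by positivity)
    calc ((a:ℝ)+1) * Real.sqrt ((a:ℝ)+1) * (((b:ℝ)+1) * Real.sqrt ((b:ℝ)+1))
        = (((a:ℝ)+1) * ((b:ℝ)+1)) * (Real.sqrt ((a:ℝ)+1) * Real.sqrt ((b:ℝ)+1)) := by ring
      _ ≤ (((a:ℝ)+1) * ((b:ℝ)+1)) * ((a:ℝ)+1) :=
          mul_le_mul_of_nonneg_left hsq (by positivity)
      _ = ((a:ℝ)+1)^2 * ((b:ℝ)+1) := by ring
  · positivity


lemma inner_hasSum (a : ℕ) :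
    HasSum (fun b : ℕ => gF (a, b)) (Hh (a+1) / ((a:ℝ)+1)^2) := by
  set F : ℕ → ℝ := fun b => (1/((a:ℝ)+1)^2) * ∑ k ∈ Finset.range (a+1), 1/((b:ℝ)+(k:ℝ)+1)
    with hF
  have hdiff : ∀ b : ℕ, gF (a, b) = F b - F (b+1) := by
    intro b
    have tele : ∑ k ∈ Finset.range (a+1),
        (1/((b:ℝ)+(k:ℝ)+1) - 1/((b:ℝ)+((k:ℝ)+1)+1)) =
        1/((b:ℝ)+1) - 1/((b:ℝ)+((a:ℝ)+1)+1) := by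
      have := Finset.sum_range_sub' (f := fun k : ℕ => 1/((b:ℝ)+(k:ℝ)+1)) (n := a+1)
      push_cast at this ⊢
      convert this using 2 <;> push_cast <;> ring_nf
    have : F b - F (b+1) = (1/((a:ℝ)+1)^2) * (1/((b:ℝ)+1) - 1/((b:ℝ)+((a:ℝ)+1)+1)) := by
      rw [hF]
      simp only
      rw [← mul_sub, ← Finset.sum_sub_distrib]
      push_cast
      rw [← tele]
      congr 1
      apply Finset.sum_congr rfl
      intro k _
      push_cast
      ring_nf
    rw [this]
    unfold gF
    have h1 : ((a:ℝ)+1) ≠ 0 := by positivity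
    have h2 : ((b:ℝ)+1) ≠ 0 := by positivity
    have h3 : ((b:ℝ)+((a:ℝ)+1)+1) ≠ 0 := by positivity
    field_simp
    ring
  have hF0 : F 0 = Hh (a+1) / ((a:ℝ)+1)^2 := by
    rw [hF, Hh]
    simp only [Nat.cast_zero, zero_add]
    rw [one_div, inv_mul_eq_div]
  have hFlim : Tendsto F atTop (𝓝 0) := by
    have : Tendsto (fun b : ℕ => ∑ k ∈ Finset.range (a+1), 1/((b:ℝ)+(k:ℝ)+1)) atTop
        (𝓝 (∑ k ∈ Finset.range (a+1), (0:ℝ))) := by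
      apply tendsto_finset_sum
      intro k _
      have ht : Tendsto (fun b : ℕ => ((b:ℝ)+((k:ℝ)+1))) atTop atTop :=
        tendsto_atTop_add_const_right _ _ tendsto_natCast_atTop_atTop
      have := ht.inv_tendsto_atTop
      simp only [one_div]
      refine this.congr fun b => ?_
      simp only [Pi.inv_apply]
      ring_nf
    rw [hF]
    have := this.const_mul (1/((a:ℝ)+1)^2)
    simpa using this
  rw [hasSum_iff_tendsto_nat_of_nonneg (fun b => by unfold gF; positivity)]
  have hps : ∀ N : ℕ, ∑ b ∈ Finset.range N, gF (a, b) = F 0 - F N := by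
    intro N
    rw [Finset.sum_congr rfl (fun b _ => hdiff b), Finset.sum_range_sub']
  rw [← hF0]
  have := tendsto_const_nhds (x := F 0) (f := atTop (α := ℕ)) |>.sub hFlim
  rw [sub_zero] at this
  exact this.congr fun N => (hps N).symm



lemma summable_zeta3 : Summable (fun n : ℕ => 1 / ((n:ℝ)+1)^3) := by
  have h := (summable_nat_add_iff 1).2 (Real.summable_one_div_nat_pow.2 (by norm_num : 1 < 3))
  refine h.congr fun n => ?_
  push_cast
  ring

lemma summable_outer : Summable (fun a : ℕ => Hh (a+1) / ((a:ℝ)+1)^2) :=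
  summable_gF.prod.congr fun a => (inner_hasSum a).tsum_eq

lemma sum_g_eq : ∑' p : ℕ × ℕ, gF p = ∑' a : ℕ, Hh (a+1) / ((a:ℝ)+1)^2 := by
  rw [Summable.tsum_prod summable_gF]
  exact tsum_congr fun a => (inner_hasSum a).tsum_eq

lemma summable_inner_w (a : ℕ) : Summable (fun k : ℕ => wF (a, k)) :=
  summable_wF.prod_factor a

lemma sum_w_inner (a : ℕ) : ∑' k : ℕ, wF (a, k) = Hh a / ((a:ℝ)+1)^2 := by
  rw [tsum_eq_sum (s := Finset.range a) (fun k hk => by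
    unfold wF; simp only [ite_eq_right_iff]; intro h; exact absurd (Finset.mem_range.2 h) hk)]
  rw [Hh, Finset.sum_div]
  refine Finset.sum_congr rfl fun k hk => ?_
  unfold wF
  rw [if_pos (Finset.mem_range.1 hk)]
  rw [div_div]
  ring_nf

lemma sum_w_eq : ∑' p : ℕ × ℕ, wF p = ∑' a : ℕ, Hh a / ((a:ℝ)+1)^2 := by
  rw [Summable.tsum_prod summable_wF]
  exact tsum_congr fun a => sum_w_inner a

lemma sum_w_eq_t : ∑' p : ℕ × ℕ, wF p = ∑' p : ℕ × ℕ, tF p := by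
  have hinj : Function.Injective (fun p : ℕ × ℕ => (p.1 + p.2 + 1, p.1)) := by
    intro p q h
    simp only [Prod.mk.injEq] at h
    exact Prod.ext h.2 (by omega)
  have hsupp : Function.support wF ⊆ Set.range (fun p : ℕ × ℕ => (p.1 + p.2 + 1, p.1)) := by
    intro q hq
    obtain ⟨x, y⟩ := q
    have hyx : y < x := by
      by_contra h
      exact hq (by unfold wF; exact if_neg h)
    refine ⟨(y, x - y - 1), ?_⟩
    show (y + (x - y - 1) + 1, y) = (x, y)
    rw [Prod.mk.injEq]
    exact ⟨by omega, rfl⟩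
  have := hinj.tsum_eq (f := wF) hsupp
  rw [← this]
  refine tsum_congr fun p => ?_
  unfold wF tF
  rw [if_pos (by omega : (p.1 + p.2 + 1, p.1).2 < (p.1 + p.2 + 1, p.1).1)]
  simp only
  push_cast
  ring_nf

lemma summable_hha : Summable (fun a : ℕ => Hh a / ((a:ℝ)+1)^2) :=
  summable_wF.prod.congr fun a => sum_w_inner a

lemma split_eq :
    ∑' a : ℕ, Hh (a+1) / ((a:ℝ)+1)^2 =
      (∑' a : ℕ, Hh a / ((a:ℝ)+1)^2) + ∑' n : ℕ, 1 / ((n:ℝ)+1)^3 := by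
  rw [← Summable.tsum_add summable_hha summable_zeta3]
  refine tsum_congr fun a => ?_
  rw [Hh, Finset.sum_range_succ, ← Hh]
  have h : ((a:ℝ)+1) ≠ 0 := by positivity
  field_simp

lemma symm_eq : ∑' p : ℕ × ℕ, gF p = 2 * ∑' p : ℕ × ℕ, tF p := by
  have hswap : Summable (fun p : ℕ × ℕ => tF p.swap) :=
    ((Equiv.prodComm ℕ ℕ).summable_iff (f := tF)).2 summable_tF
  have hpt : ∀ p : ℕ × ℕ, gF p = tF p + tF p.swap := by
    intro ⟨a, b⟩
    unfold gF tF
    simp only [Prod.swap_prod_mk]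
    rw [div_add_div _ _ (by positivity) (by positivity), div_eq_div_iff (by positivity) (by positivity)]
    ring
  calc ∑' p : ℕ × ℕ, gF p = ∑' p : ℕ × ℕ, (tF p + tF p.swap) := tsum_congr hpt
    _ = (∑' p : ℕ × ℕ, tF p) + ∑' p : ℕ × ℕ, tF p.swap := Summable.tsum_add summable_tF hswap
    _ = 2 * ∑' p : ℕ × ℕ, tF p := by
        have h := (Equiv.prodComm ℕ ℕ).tsum_eq tF
        simp only [Equiv.coe_prodComm] at h
        rw [show (fun p : ℕ × ℕ => tF p.swap) = tF ∘ Prod.swap from rfl] at *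
        rw [h]; ring

def e1Equiv : ℕ × ℕ ≃ {p : ℕ × ℕ // p.2 < p.1 ∧ 0 < p.2} where
  toFun p := ⟨(p.1 + p.2 + 2, p.1 + 1), by constructor <;> omega⟩
  invFun q := (q.1.2 - 1, q.1.1 - q.1.2 - 1)
  left_inv p := by simp only; exact Prod.ext (by omega) (by omega)
  right_inv q := by
    obtain ⟨⟨m, n⟩, h1, h2⟩ := q
    exact Subtype.ext (Prod.ext
      (by show n - 1 + (m - n - 1) + 2 = m; omega)
      (by show n - 1 + 1 = n; omega))


/-- Euler's identity: `ζ(2,1) = ζ(3)`, i.e.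
`Σ_{m>n>0} 1/(m²·n) = Σ_{m≥1} 1/m³`. -/
theorem zeta_two_one_eq_zeta_three :
    (∑' p : {p : ℕ × ℕ // p.2 < p.1 ∧ 0 < p.2},
      (1 : ℝ) / ((p.1.1 : ℝ) ^ 2 * (p.1.2 : ℝ))) =
    ∑' n : ℕ, (1 : ℝ) / ((n : ℝ) + 1) ^ 3 := by
  have hL : (∑' p : {p : ℕ × ℕ // p.2 < p.1 ∧ 0 < p.2},
      (1 : ℝ) / ((p.1.1 : ℝ) ^ 2 * (p.1.2 : ℝ))) = ∑' p : ℕ × ℕ, tF p := by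
    rw [← e1Equiv.tsum_eq]
    refine tsum_congr fun p => ?_
    unfold tF
    show (1:ℝ) / ((((p.1 + p.2 + 2 : ℕ)):ℝ)^2 * ((p.1 + 1 : ℕ):ℝ)) = _
    push_cast
    ring_nf
  have key : 2 * (∑' p : ℕ × ℕ, tF p) =
      (∑' p : ℕ × ℕ, tF p) + ∑' n : ℕ, 1 / ((n:ℝ)+1)^3 := by
    rw [← symm_eq, sum_g_eq, split_eq, ← sum_w_eq_t, sum_w_eq]
  rw [hL]
  linarith [key]
end

section
/- The multiple harmonic sums, viewed as arithmetic functions, are linearly independent over ℚ: the family of functions H_s : ℕ → ℚ, indexed by all compositions s of positive integers together with the empty composition (whose harmonic sum is the constant function 1), is ℚ-linearly independent in the space of functions from ℕ to ℚ. -/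
/-- The multiple harmonic sum `H_{s_1,…,s_r}(n) = Σ_{n ≥ n_1 > … > n_r > 0}
1/(n_1^{s_1}⋯n_r^{s_r}) ∈ ℚ`, indexed by a list `(s_1,…,s_r)` (the empty list gives
the constant function `1`), defined by the equivalent nested recursion
`H_{s::t}(n) = Σ_{m=1}^{n} (1/m^s)·H_t(m-1)`. -/
def H : List ℕ → ℕ → ℚ
  | [], _ => 1
  | s :: t, n => ∑ m ∈ Finset.Icc 1 n, (1 / (m : ℚ) ^ s) * H t (m - 1)

open Polynomial

noncomputable section
namespace MHS

/-- shift of a polynomial: (σ f)(x) = f (x+1) -/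
def sh (f : ℚ[X]) : ℚ[X] := f.comp (X + C 1)

lemma sh_add (f g : ℚ[X]) : sh (f + g) = sh f + sh g := by unfold sh; rw [add_comp]
lemma sh_mul (f g : ℚ[X]) : sh (f * g) = sh f * sh g := by unfold sh; rw [mul_comp]
lemma sh_sub (f g : ℚ[X]) : sh (f - g) = sh f - sh g := by unfold sh; rw [sub_comp]
lemma sh_pow (f : ℚ[X]) (n : ℕ) : sh (f ^ n) = sh f ^ n := by unfold sh; rw [pow_comp]
lemma sh_C (c : ℚ) : sh (C c) = C c := C_comp
lemma sh_zero : sh 0 = 0 := zero_comp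

lemma sh_sh_inv (f : ℚ[X]) : (sh f).comp (X - C 1) = f := by
  unfold sh
  rw [comp_assoc]
  simp

lemma sh_injective : Function.Injective sh := by
  intro a b h
  have h2 := congrArg (fun g => g.comp (X - C 1)) h
  simpa only [sh_sh_inv] using h2

lemma sh_ne_zero {f : ℚ[X]} (hf : f ≠ 0) : sh f ≠ 0 := by
  intro h
  exact hf (sh_injective (by simpa [sh_zero] using h))

lemma sh_eval (f : ℚ[X]) (x : ℚ) : (sh f).eval x = f.eval (x + 1) := by
  unfold sh; simp [eval_comp]

lemma sh_dvd {a b : ℚ[X]} (h : a ∣ b) : sh a ∣ sh b := by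
  obtain ⟨c, rfl⟩ := h
  exact ⟨sh c, sh_mul a c⟩

lemma comp_dvd {a b u : ℚ[X]} (h : a ∣ b) : a.comp u ∣ b.comp u := by
  obtain ⟨c, rfl⟩ := h
  exact ⟨c.comp u, mul_comp a c u⟩

lemma sh_X_sub_C (r : ℚ) : sh (X - C (r + 1)) = X - C r := by
  unfold sh
  rw [sub_comp, X_comp, C_comp, map_add]
  ring

/-- root multiplicity under shift -/
lemma rm_sh (f : ℚ[X]) (a : ℚ) :
    rootMultiplicity a (sh f) = rootMultiplicity (a + 1) f := by
  rcases eq_or_ne f 0 with rfl | hf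
  · simp [sh_zero]
  have hsf : sh f ≠ 0 := sh_ne_zero hf
  apply le_antisymm
  · rw [le_rootMultiplicity_iff hf]
    have h1 : (X - C a) ^ rootMultiplicity a (sh f) ∣ sh f := pow_rootMultiplicity_dvd _ _
    have h2 := comp_dvd (u := X - C 1) h1
    rw [sh_sh_inv, pow_comp, sub_comp, X_comp, C_comp] at h2
    have : (X - C 1 - C a : ℚ[X]) = X - C (a + 1) := by rw [map_add]; ring
    rwa [this] at h2
  · rw [le_rootMultiplicity_iff hsf]
    have h1 : (X - C (a+1)) ^ rootMultiplicity (a+1) f ∣ f := pow_rootMultiplicity_dvd _ _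
    have h2 := sh_dvd h1
    rwa [sh_pow, sh_X_sub_C] at h2

/-- root multiplicity of a difference: lower bound -/
lemma rm_sub_ge {x y : ℚ[X]} (a : ℚ) (hxy : x - y ≠ 0) :
    min (rootMultiplicity a x) (rootMultiplicity a y) ≤ rootMultiplicity a (x - y) := by
  rw [le_rootMultiplicity_iff hxy]
  have hx : (X - C a) ^ min (rootMultiplicity a x) (rootMultiplicity a y) ∣ x :=
    dvd_trans (pow_dvd_pow _ (min_le_left _ _)) (pow_rootMultiplicity_dvd _ _)
  have hy : (X - C a) ^ min (rootMultiplicity a x) (rootMultiplicity a y) ∣ y :=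
    dvd_trans (pow_dvd_pow _ (min_le_right _ _)) (pow_rootMultiplicity_dvd _ _)
  exact dvd_sub hx hy

/-- root multiplicity of a difference: equality when multiplicities differ -/
lemma rm_sub_eq {x y : ℚ[X]} (a : ℚ) (hx : x ≠ 0)
    (h : rootMultiplicity a x < rootMultiplicity a y) :
    rootMultiplicity a (x - y) = rootMultiplicity a x := by
  have hxy : x - y ≠ 0 := by
    intro h0
    rw [sub_eq_zero] at h0
    subst h0
    exact lt_irrefl _ h
  apply le_antisymm
  · by_contra hc
    push_neg at hc
    have h1 : (X - C a) ^ (rootMultiplicity a x + 1) ∣ x - y :=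
      dvd_trans (pow_dvd_pow _ hc) (pow_rootMultiplicity_dvd _ _)
    have h2 : (X - C a) ^ (rootMultiplicity a x + 1) ∣ y :=
      dvd_trans (pow_dvd_pow _ h) (pow_rootMultiplicity_dvd _ _)
    have h3 : (X - C a) ^ (rootMultiplicity a x + 1) ∣ x := by
      have := dvd_add h1 h2
      rwa [sub_add_cancel] at this
    rw [← le_rootMultiplicity_iff hx] at h3
    omega
  · calc rootMultiplicity a x = min (rootMultiplicity a x) (rootMultiplicity a y) :=
          (min_eq_left h.le).symm
      _ ≤ _ := rm_sub_ge a hxy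

lemma rm_neg (a : ℚ) (x : ℚ[X]) : rootMultiplicity a (-x) = rootMultiplicity a x := by
  rcases eq_or_ne x 0 with rfl | hx
  · simp
  have h : (-x : ℚ[X]) = C (-1) * x := by rw [map_neg, map_one]; ring
  rw [h, rootMultiplicity_mul (by simp [hx]), rootMultiplicity_C, zero_add]

/-- a nonzero polynomial has no natural-number roots beyond some bound -/
lemma exists_bound_no_nat_root {q : ℚ[X]} (hq : q ≠ 0) :
    ∃ M : ℕ, ∀ n : ℕ, M ≤ n → q.eval (n : ℚ) ≠ 0 := by
  have hfin : {x : ℚ | q.IsRoot x}.Finite := finite_setOf_isRoot hq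
  have hfin2 : {n : ℕ | q.eval (n : ℚ) = 0}.Finite := by
    apply Set.Finite.preimage (f := fun n : ℕ => (n : ℚ)) (Set.injOn_of_injective
      (fun a b hab => Nat.cast_injective hab)) hfin
  obtain ⟨M, hM⟩ := hfin2.bddAbove
  refine ⟨M + 1, fun n hn h0 => ?_⟩
  have := hM (Set.mem_setOf_eq ▸ h0 : n ∈ {n : ℕ | q.eval (n : ℚ) = 0})
  omega

/-- a polynomial vanishing at all naturals `≥ N` is zero -/
lemma eq_zero_of_eval_nat {p : ℚ[X]} (N : ℕ) (h : ∀ n : ℕ, N ≤ n → p.eval (n : ℚ) = 0) :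
    p = 0 := by
  apply eq_zero_of_infinite_isRoot
  apply Set.infinite_of_injective_forall_mem (f := fun n : ℕ => ((n + N : ℕ) : ℚ))
    (fun a b hab => by have : a + N = b + N := Nat.cast_injective hab; omega)
    (fun n => h (n + N) (by omega))

lemma key_coprime (S : ℕ) (p q : ℚ[X]) (hq : q ≠ 0) (hcop : IsCoprime p q) (c : ℕ → ℚ)
    (h : (sh p * q - p * sh q) * (X + C 1) ^ S =
      (∑ s ∈ Finset.Icc 1 S, C (c s) * (X + C 1) ^ (S - s)) * (q * sh q)) :
    ∀ s ∈ Finset.Icc 1 S, c s = 0 := by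
  by_contra hc
  push_neg at hc
  obtain ⟨s₀, hs₀, hcs₀⟩ := hc
  classical
  -- the largest index with nonzero coefficient
  set E := (Finset.Icc 1 S).filter (fun s => c s ≠ 0) with hE
  have hEne : E.Nonempty := ⟨s₀, Finset.mem_filter.2 ⟨hs₀, hcs₀⟩⟩
  set S' := E.max' hEne with hS'
  have hS'E : S' ∈ E := E.max'_mem hEne
  have hS'Icc : S' ∈ Finset.Icc 1 S := (Finset.mem_filter.1 hS'E).1
  have hS'1 : 1 ≤ S' := (Finset.mem_Icc.1 hS'Icc).1
  have hS'S : S' ≤ S := (Finset.mem_Icc.1 hS'Icc).2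
  have hcS' : c S' ≠ 0 := (Finset.mem_filter.1 hS'E).2
  have hcbig : ∀ s ∈ Finset.Icc 1 S, S' < s → c s = 0 := by
    intro s hs hlt
    by_contra hne
    exact absurd (E.le_max' s (Finset.mem_filter.2 ⟨hs, hne⟩)) (by omega)
  -- factor the coefficient polynomial
  set C' : ℚ[X] := ∑ s ∈ Finset.Icc 1 S', C (c s) * (X + C 1) ^ (S' - s) with hC'
  have hfac : (∑ s ∈ Finset.Icc 1 S, C (c s) * (X + C 1) ^ (S - s)) =
      (X + C 1) ^ (S - S') * C' := by
    rw [hC', Finset.mul_sum]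
    rw [← Finset.sum_subset (Finset.Icc_subset_Icc_right hS'S)
      (fun s hs hns => by
        have h1 : S' < s ∨ s < 1 := by
          simp only [Finset.mem_Icc] at hs hns; omega
        have h2 : c s = 0 := by
          rcases h1 with h1 | h1
          · exact hcbig s hs h1
          · simp only [Finset.mem_Icc] at hs; omega
        simp [h2])]
    apply Finset.sum_congr rfl
    intro s hs
    have hsS' : s ≤ S' := (Finset.mem_Icc.1 hs).2
    rw [← mul_assoc, mul_comm ((X + C 1 : ℚ[X]) ^ (S - S')) (C (c s)), mul_assoc,
      ← pow_add]
    congr 2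
    omega
  -- C' is nonzero: its value at -1 is c S'
  have hC'eval : C'.eval (-1) = c S' := by
    rw [hC', eval_finset_sum]
    rw [Finset.sum_eq_single S']
    · simp
    · intro s hs hne
      have hlt : S' - s ≠ 0 := by
        have := (Finset.mem_Icc.1 hs).2
        omega
      simp [zero_pow hlt]
    · intro hna
      exact absurd hS'Icc (by simpa [hS'1, hS'S] using hna)
  have hC'ne : C' ≠ 0 := fun h0 => hcS' (by rw [← hC'eval, h0, eval_zero])
  -- cancel (X + 1)^(S - S')
  set D : ℚ[X] := sh p * q - p * sh q with hD
  have hXne : ((X + C 1 : ℚ[X]) ^ (S - S')) ≠ 0 := pow_ne_zero _ (X_add_C_ne_zero 1)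
  have h' : D * (X + C 1) ^ S' = C' * (q * sh q) := by
    apply mul_left_cancel₀ hXne
    calc (X + C 1) ^ (S - S') * (D * (X + C 1) ^ S')
        = D * ((X + C 1) ^ (S - S') * (X + C 1) ^ S') := by ring
      _ = D * (X + C 1) ^ S := by rw [← pow_add]; congr 2; omega
      _ = (X + C 1) ^ (S - S') * C' * (q * sh q) := by rw [h, hfac]
      _ = (X + C 1) ^ (S - S') * (C' * (q * sh q)) := by ring
  have hRHSne : C' * (q * sh q) ≠ 0 :=
    mul_ne_zero hC'ne (mul_ne_zero hq (sh_ne_zero hq))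
  have hDne : D ≠ 0 := by
    intro h0
    rw [h0, zero_mul] at h'
    exact hRHSne h'.symm
  have hpne : p ≠ 0 := by
    intro h0
    apply hDne
    rw [hD, h0, sh_zero]
    ring
  -- multiplicity notation
  have hnocommon : ∀ x : ℚ, q.IsRoot x → ¬ p.IsRoot x := by
    intro x hq0x hpx
    obtain ⟨a, b, hab⟩ := hcop
    have h2 := congrArg (eval x) hab
    have hp0 : eval x p = 0 := hpx
    have hq0 : eval x q = 0 := hq0x
    simp [hp0, hq0] at h2
  have hcast : ∀ j : ℤ, ((j : ℚ) + 1) = ((j + 1 : ℤ) : ℚ) := by intro j; push_cast; ring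
  -- the master equation at each integer point
  have hEQ : ∀ j : ℤ, rootMultiplicity (j : ℚ) D + (if (j : ℚ) = -1 then S' else 0) =
      rootMultiplicity (j : ℚ) C' + rootMultiplicity (j : ℚ) q
        + rootMultiplicity ((j + 1 : ℤ) : ℚ) q := by
    intro j
    have h1 := congrArg (rootMultiplicity (j : ℚ)) h'
    rw [rootMultiplicity_mul (by rw [h']; exact hRHSne),
      rootMultiplicity_mul hRHSne,
      rootMultiplicity_mul (mul_ne_zero hq (sh_ne_zero hq))] at h1
    have hX : rootMultiplicity (j : ℚ) ((X + C 1) ^ S') = if (j : ℚ) = -1 then S' else 0 := by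
      have hXC : (X + C 1 : ℚ[X]) = X - C (-1) := by rw [map_neg, map_one]; ring
      rw [hXC]
      by_cases hj : (j : ℚ) = -1
      · rw [hj, if_pos rfl, rootMultiplicity_X_sub_C_pow]
      · rw [if_neg hj]
        apply rootMultiplicity_eq_zero
        simp only [IsRoot, eval_pow, eval_sub, eval_X, eval_C]
        intro h0
        have := pow_eq_zero_iff (n := S') (by omega) |>.1 h0
        exact hj (by linarith [sub_eq_zero.1 this])
    have hsq : rootMultiplicity (j : ℚ) (sh q) = rootMultiplicity ((j + 1 : ℤ) : ℚ) q := by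
      rw [rm_sh, hcast]
    rw [hX, hsq] at h1
    omega
  have hrmC' : rootMultiplicity (-1 : ℚ) C' = 0 :=
    rootMultiplicity_eq_zero (fun h0 => hcS' (by rw [← hC'eval]; exact h0))
  -- the set of integer poles of q
  have hJfin : {j : ℤ | 0 < rootMultiplicity (j : ℚ) q}.Finite := by
    have hset : {j : ℤ | 0 < rootMultiplicity (j : ℚ) q}
        = (fun j : ℤ => (j : ℚ)) ⁻¹' {x : ℚ | q.IsRoot x} := by
      ext j
      simp only [Set.mem_setOf_eq, Set.mem_preimage]
      exact rootMultiplicity_pos hq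
    rw [hset]
    exact Set.Finite.preimage
      (Set.injOn_of_injective (fun a b hab => Int.cast_injective hab))
      (finite_setOf_isRoot hq)
  have hJne : ∃ j : ℤ, 0 < rootMultiplicity (j : ℚ) q := by
    by_contra hno
    push_neg at hno
    have h1 := hEQ (-1)
    have hc1 : ((-1 : ℤ) : ℚ) = -1 := by norm_num
    rw [hc1, if_pos rfl, hrmC'] at h1
    have hm1 := Nat.le_zero.1 (hno (-1))
    have hm0 := Nat.le_zero.1 (hno (-1 + 1))
    rw [hc1] at hm1
    rw [hm1, hm0] at h1
    omega
  set F := hJfin.toFinset with hF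
  have hFne : F.Nonempty := by
    obtain ⟨j, hj⟩ := hJne
    exact ⟨j, hJfin.mem_toFinset.2 hj⟩
  set jmax := F.max' hFne with hjmax
  set jmin := F.min' hFne with hjmin
  have hminmax : jmin ≤ jmax := F.min'_le _ (F.max'_mem hFne)
  have hjmaxmem : 0 < rootMultiplicity (jmax : ℚ) q := hJfin.mem_toFinset.1 (F.max'_mem hFne)
  have hjminmem : 0 < rootMultiplicity (jmin : ℚ) q := hJfin.mem_toFinset.1 (F.min'_mem hFne)
  have hle : ∀ j : ℤ, 0 < rootMultiplicity (j : ℚ) q → j ≤ jmax :=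
    fun j hj => F.le_max' j (hJfin.mem_toFinset.2 hj)
  have hge : ∀ j : ℤ, 0 < rootMultiplicity (j : ℚ) q → jmin ≤ j :=
    fun j hj => F.min'_le j (hJfin.mem_toFinset.2 hj)
  have hmqmax1 : rootMultiplicity ((jmax + 1 : ℤ) : ℚ) q = 0 := by
    by_contra h0
    have := hle _ (Nat.pos_of_ne_zero h0)
    omega
  have hmqmin1 : rootMultiplicity ((jmin - 1 : ℤ) : ℚ) q = 0 := by
    by_contra h0
    have := hge _ (Nat.pos_of_ne_zero h0)
    omega
  have hmpmax : rootMultiplicity ((jmax : ℤ) : ℚ) p = 0 :=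
    rootMultiplicity_eq_zero (hnocommon _ ((rootMultiplicity_pos hq).1 hjmaxmem))
  have hmpmin : rootMultiplicity ((jmin : ℤ) : ℚ) p = 0 :=
    rootMultiplicity_eq_zero (hnocommon _ ((rootMultiplicity_pos hq).1 hjminmem))
  have hxne : p * sh q ≠ 0 := mul_ne_zero hpne (sh_ne_zero hq)
  have hyne : sh p * q ≠ 0 := mul_ne_zero (sh_ne_zero hpne) hq
  -- jmax = -1
  have hjmaxeq : jmax = -1 := by
    have hrmx : rootMultiplicity (jmax : ℚ) (p * sh q) = 0 := by
      rw [rootMultiplicity_mul hxne, rm_sh, hcast, hmpmax, hmqmax1]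
    have hrmy : 0 < rootMultiplicity (jmax : ℚ) (sh p * q) := by
      rw [rootMultiplicity_mul hyne]
      omega
    have hrmD : rootMultiplicity (jmax : ℚ) D = 0 := by
      have hDeq : D = -(p * sh q - sh p * q) := by rw [hD]; ring
      rw [hDeq, rm_neg, rm_sub_eq _ hxne (by rw [hrmx]; exact hrmy), hrmx]
    have h1 := hEQ jmax
    rw [hrmD, hmqmax1] at h1
    by_cases hj : (jmax : ℚ) = -1
    · have : ((jmax : ℤ) : ℚ) = ((-1 : ℤ) : ℚ) := by rw [hj]; norm_num
      exact Int.cast_injective this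
    · rw [if_neg hj] at h1
      omega
  -- jmin = 0
  have hjmineq : jmin = 0 := by
    have h2 : jmin - 1 + 1 = jmin := by omega
    have hrmy : rootMultiplicity ((jmin - 1 : ℤ) : ℚ) (sh p * q) = 0 := by
      rw [rootMultiplicity_mul hyne, rm_sh, hcast, h2, hmpmin, hmqmin1]
    have hrmx : 0 < rootMultiplicity ((jmin - 1 : ℤ) : ℚ) (p * sh q) := by
      rw [rootMultiplicity_mul hxne, rm_sh, hcast, h2]
      omega
    have hrmD : rootMultiplicity ((jmin - 1 : ℤ) : ℚ) D = 0 := by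
      rw [hD, rm_sub_eq _ hyne (by rw [hrmy]; exact hrmx), hrmy]
    have h1 := hEQ (jmin - 1)
    rw [hrmD, h2, hmqmin1] at h1
    by_cases hj : ((jmin - 1 : ℤ) : ℚ) = -1
    · have hj2 : ((jmin - 1 : ℤ) : ℚ) = ((-1 : ℤ) : ℚ) := by rw [hj]; norm_num
      have := Int.cast_injective hj2
      omega
    · rw [if_neg hj] at h1
      omega
  omega


/-- general form of the key lemma, without coprimality -/
lemma key (S : ℕ) (p q : ℚ[X]) (hq : q ≠ 0) (c : ℕ → ℚ)
    (h : (sh p * q - p * sh q) * (X + C 1) ^ S =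
      (∑ s ∈ Finset.Icc 1 S, C (c s) * (X + C 1) ^ (S - s)) * (q * sh q)) :
    ∀ s ∈ Finset.Icc 1 S, c s = 0 := by
  classical
  set g := EuclideanDomain.gcd p q with hg
  have hgne : g ≠ 0 := by
    intro h0
    rw [hg, EuclideanDomain.gcd_eq_zero_iff] at h0
    exact hq h0.2
  set p' := p / g with hp'
  set q' := q / g with hq'
  have hpp : p = g * p' := (EuclideanDomain.mul_div_cancel' hgne (EuclideanDomain.gcd_dvd_left p q)).symm
  have hqq : q = g * q' := (EuclideanDomain.mul_div_cancel' hgne (EuclideanDomain.gcd_dvd_right p q)).symm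
  have hq'ne : q' ≠ 0 := by
    intro h0
    rw [h0, mul_zero] at hqq
    exact hq hqq
  have hcop : IsCoprime p' q' := by
    have hbez := EuclideanDomain.gcd_eq_gcd_ab p q
    refine ⟨EuclideanDomain.gcdA p q, EuclideanDomain.gcdB p q, ?_⟩
    have h1 : g * (EuclideanDomain.gcdA p q * p' + EuclideanDomain.gcdB p q * q') = g * 1 := by
      rw [mul_one]
      calc g * (EuclideanDomain.gcdA p q * p' + EuclideanDomain.gcdB p q * q')
          = (g * p') * EuclideanDomain.gcdA p q + (g * q') * EuclideanDomain.gcdB p q := by ring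
        _ = p * EuclideanDomain.gcdA p q + q * EuclideanDomain.gcdB p q := by rw [← hpp, ← hqq]
        _ = g := by rw [hg, hbez]
    exact mul_left_cancel₀ hgne h1
  apply key_coprime S p' q' hq'ne hcop c
  apply mul_left_cancel₀ (mul_ne_zero hgne (sh_ne_zero hgne))
  have hshp : sh p = sh g * sh p' := by rw [hpp, sh_mul]
  have hshq : sh q = sh g * sh q' := by rw [hqq, sh_mul]
  calc g * sh g * ((sh p' * q' - p' * sh q') * (X + C 1) ^ S)
      = (sh p * q - p * sh q) * (X + C 1) ^ S := by
        rw [hshp, hshq, hpp, hqq]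
        ring
    _ = (∑ s ∈ Finset.Icc 1 S, C (c s) * (X + C 1) ^ (S - s)) * (q * sh q) := h
    _ = g * sh g * ((∑ s ∈ Finset.Icc 1 S, C (c s) * (X + C 1) ^ (S - s)) * (q' * sh q')) := by
        rw [hshq, hqq]
        ring

/-- two polynomials whose "ratio" is shift-invariant are proportional -/
lemma parallel (a q : ℚ[X]) (hq : q ≠ 0) (h : a * sh q = q * sh a) :
    ∃ c : ℚ, a = C c * q := by
  obtain ⟨M, hM⟩ := exists_bound_no_nat_root hq
  have hqM : q.eval (M : ℚ) ≠ 0 := hM M le_rfl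
  have claim : ∀ n : ℕ, M ≤ n → a.eval (n : ℚ) * q.eval (M : ℚ) = a.eval (M : ℚ) * q.eval (n : ℚ) := by
    intro n hn
    induction n, hn using Nat.le_induction with
    | base => ring
    | succ n hn ih =>
      have hstep := congrArg (eval (n : ℚ)) h
      rw [eval_mul, eval_mul, sh_eval, sh_eval] at hstep
      have hcast : ((n : ℚ) + 1) = ((n + 1 : ℕ) : ℚ) := by push_cast; ring
      rw [hcast] at hstep
      have hqn : q.eval (n : ℚ) ≠ 0 := hM n hn
      apply mul_right_cancel₀ hqn
      calc a.eval ((n+1 : ℕ) : ℚ) * q.eval (M : ℚ) * q.eval (n : ℚ)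
          = q.eval (M : ℚ) * (q.eval (n : ℚ) * a.eval ((n+1:ℕ) : ℚ)) := by ring
        _ = q.eval (M : ℚ) * (a.eval (n : ℚ) * q.eval ((n+1:ℕ) : ℚ)) := by rw [hstep]
        _ = (a.eval (n : ℚ) * q.eval (M : ℚ)) * q.eval ((n+1:ℕ) : ℚ) := by ring
        _ = (a.eval (M : ℚ) * q.eval (n : ℚ)) * q.eval ((n+1:ℕ) : ℚ) := by rw [ih]
        _ = a.eval (M : ℚ) * q.eval ((n+1:ℕ) : ℚ) * q.eval (n : ℚ) := by ring
  have hPz : a * C (q.eval (M : ℚ)) - C (a.eval (M : ℚ)) * q = 0 := by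
    apply eq_zero_of_eval_nat M
    intro n hn
    rw [eval_sub, eval_mul, eval_mul, eval_C, eval_C, sub_eq_zero]
    exact claim n hn
  rw [sub_eq_zero] at hPz
  refine ⟨a.eval (M : ℚ) / q.eval (M : ℚ), ?_⟩
  apply mul_right_cancel₀ (b := C (q.eval (M : ℚ))) (by simpa using hqM)
  rw [hPz]
  rw [mul_comm (C (a.eval (M : ℚ) / q.eval (M : ℚ))) q, mul_assoc, ← map_mul]
  rw [div_mul_cancel₀ _ hqM]
  ring

end MHS

namespace MHS
open Polynomial

lemma H_nil (n : ℕ) : H [] n = 1 := rfl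

lemma H_succ (t : List ℕ) (n : ℕ) :
    H t (n + 1) = H t n
      + (if t = [] then 0 else (1 / ((n : ℚ) + 1) ^ t.headI) * H t.tail n) := by
  cases t with
  | nil => simp [H]
  | cons s u =>
    rw [if_neg (by simp)]
    simp only [H, List.headI, List.tail_cons]
    rw [Finset.sum_Icc_succ_top (by omega : 1 ≤ n + 1)]
    congr 1
    rw [show n + 1 - 1 = n from rfl, show ((n + 1 : ℕ) : ℚ) = (n : ℚ) + 1 by push_cast; ring]

lemma headI_cons_tail (t : List ℕ) (h : t ≠ []) : t.headI :: t.tail = t := by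
  cases t with
  | nil => exact absurd rfl h
  | cons a u => rfl

lemma main (L : ℕ) : ∀ (m : ℕ) (T : Finset (List ℕ)) (P : List ℕ → ℚ[X]) (N : ℕ),
    (∀ t ∈ T, ∀ x ∈ t, 0 < x) →
    (∀ t ∈ T, t.length ≤ L) →
    ((T.filter (fun t => t.length = L ∧ P t ≠ 0)).card ≤ m) →
    (∀ n : ℕ, N ≤ n → ∑ t ∈ T, (P t).eval (n : ℚ) * H t n = 0) →
    ∀ t ∈ T, P t = 0 := by
  classical
  induction L with
  | zero =>
    intro m T P N hpos hlen hcard hrel t ht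
    have ht0 : t = [] := List.length_eq_zero_iff.1 (Nat.le_zero.1 (hlen t ht))
    subst ht0
    apply eq_zero_of_eval_nat N
    intro n hn
    have h1 := hrel n hn
    have hTsub : T = {([] : List ℕ)} := by
      apply Finset.Subset.antisymm
      · intro u hu
        simp [List.length_eq_zero_iff.1 (Nat.le_zero.1 (hlen u hu))]
      · intro u hu
        simp only [Finset.mem_singleton] at hu
        subst hu
        exact ht
    rw [hTsub, Finset.sum_singleton, H_nil, mul_one] at h1
    exact h1
  | succ L ihL =>
    intro m
    induction m using Nat.strong_induction_on with
    | _ m ihm =>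
    intro T P N hpos hlen hcard hrel
    by_cases hfil : (T.filter (fun t => t.length = L + 1 ∧ P t ≠ 0)).Nonempty
    · exfalso
      obtain ⟨t₀, ht₀f⟩ := hfil
      rw [Finset.mem_filter] at ht₀f
      obtain ⟨ht₀T, ht₀f2⟩ := ht₀f
      obtain ⟨hlen₀, hP₀⟩ := ht₀f2
      -- notation
      set S := T.sup (fun t => t.headI) with hS
      have hheadle : ∀ t ∈ T, t.headI ≤ S := fun t ht => Finset.le_sup ht
      have hheadpos : ∀ t ∈ T, t ≠ [] → 1 ≤ t.headI := by
        intro t ht hne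
        cases t with
        | nil => exact absurd rfl hne
        | cons a u => exact hpos _ ht a (by simp)
      set Tne := T.filter (fun t => t ≠ ([] : List ℕ)) with hTne
      set T' := T ∪ Tne.image List.tail with hT'
      set Q : List ℕ → ℚ[X] := fun u =>
        (if u ∈ T then (X + C 1) ^ S * (P t₀ * sh (P u) - sh (P t₀) * P u) else 0)
          + ∑ t ∈ Tne.filter (fun t => t.tail = u),
              P t₀ * sh (P t) * (X + C 1) ^ (S - t.headI) with hQ
      have hTsubT' : T ⊆ T' := Finset.subset_union_left
      have hT'pos : ∀ u ∈ T', ∀ x ∈ u, 0 < x := by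
        intro u hu
        rcases Finset.mem_union.1 hu with h | h
        · exact hpos u h
        · obtain ⟨t, htm, rfl⟩ := Finset.mem_image.1 h
          exact fun x hx => hpos t (Finset.mem_of_mem_filter t htm) x (List.mem_of_mem_tail hx)
      have hT'len : ∀ u ∈ T', u.length ≤ L + 1 := by
        intro u hu
        rcases Finset.mem_union.1 hu with h | h
        · exact hlen u h
        · obtain ⟨t, htm, rfl⟩ := Finset.mem_image.1 h
          have := hlen t (Finset.mem_of_mem_filter t htm)
          rw [List.length_tail]
          omega
      have hfib_empty : ∀ u : List ℕ, u.length = L + 1 →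
          Tne.filter (fun t => t.tail = u) = ∅ := by
        intro u hu
        rw [Finset.filter_eq_empty_iff]
        intro t htm h0
        have h1 := hlen t (Finset.mem_of_mem_filter t htm)
        have h2 : t ≠ [] := (Finset.mem_filter.1 htm).2
        have h3 : t.tail.length = L + 1 := by rw [h0]; exact hu
        rw [List.length_tail] at h3
        have h4 : t.length ≠ 0 := fun hh => h2 (List.length_eq_zero_iff.1 hh)
        omega
      -- the shifted relation
      have hrel' : ∀ n : ℕ, N ≤ n → ∑ u ∈ T', (Q u).eval (n : ℚ) * H u n = 0 := by
        intro n hn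
        have hne1 : ((n : ℚ) + 1) ≠ 0 := by positivity
        have hA0 : ∑ t ∈ T, (P t).eval (n : ℚ) * H t n = 0 := hrel n hn
        have hA1 : ∑ t ∈ T, (P t).eval ((n : ℚ) + 1) * H t (n + 1) = 0 := by
          have h2 := hrel (n + 1) (by omega)
          rw [show (((n + 1 : ℕ)) : ℚ) = (n : ℚ) + 1 by push_cast; ring] at h2
          exact h2
        have hsplit : ∑ u ∈ T', (Q u).eval (n : ℚ) * H u n
            = (∑ u ∈ T, ((X + C 1) ^ S * (P t₀ * sh (P u) - sh (P t₀) * P u)).eval (n : ℚ) * H u n)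
              + ∑ t ∈ Tne, (P t₀ * sh (P t) * (X + C 1) ^ (S - t.headI)).eval (n : ℚ) * H t.tail n := by
          have e1 : ∀ u ∈ T', (Q u).eval (n : ℚ) * H u n
              = (if u ∈ T then ((X + C 1) ^ S * (P t₀ * sh (P u) - sh (P t₀) * P u)).eval (n : ℚ) * H u n else 0)
                + ∑ t ∈ Tne.filter (fun t => t.tail = u),
                    (P t₀ * sh (P t) * (X + C 1) ^ (S - t.headI)).eval (n : ℚ) * H t.tail n := by
            intro u hu
            rw [hQ]
            simp only []
            rw [eval_add, add_mul]
            congr 1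
            · split_ifs with h
              · rfl
              · simp
            · rw [eval_finset_sum, Finset.sum_mul]
              apply Finset.sum_congr rfl
              intro t htm
              rw [(Finset.mem_filter.1 htm).2]
          rw [Finset.sum_congr rfl e1, Finset.sum_add_distrib]
          congr 1
          · rw [Finset.sum_ite_mem, Finset.inter_eq_right.2 hTsubT']
          · exact Finset.sum_fiberwise_of_maps_to
              (fun t htm => Finset.mem_union_right _ (Finset.mem_image_of_mem List.tail htm)) _
        rw [hsplit]
        set SA := ∑ u ∈ T, (P u).eval ((n : ℚ) + 1) * H u n with hSA
        set SB := ∑ u ∈ T, (P u).eval (n : ℚ) * H u n with hSB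
        set SC := ∑ t ∈ Tne, (P t).eval ((n : ℚ) + 1) * ((1 / ((n : ℚ) + 1) ^ t.headI) * H t.tail n) with hSC
        have hSDsplit : ∑ u ∈ T, (P u).eval ((n : ℚ) + 1) * H u (n + 1) = SA + SC := by
          have e3 : ∀ u ∈ T, (P u).eval ((n : ℚ) + 1) * H u (n + 1)
              = (P u).eval ((n : ℚ) + 1) * H u n
                + (P u).eval ((n : ℚ) + 1) * (if u = [] then 0 else (1 / ((n : ℚ) + 1) ^ u.headI) * H u.tail n) := by
            intro u hu
            rw [H_succ, mul_add]
          rw [Finset.sum_congr rfl e3, Finset.sum_add_distrib]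
          congr 1
          rw [hSC, hTne, Finset.sum_filter]
          apply Finset.sum_congr rfl
          intro u hu
          by_cases h : u = [] <;> simp [h]
        have hfirst : ∑ u ∈ T, ((X + C 1) ^ S * (P t₀ * sh (P u) - sh (P t₀) * P u)).eval (n : ℚ) * H u n
            = ((n : ℚ) + 1) ^ S * ((P t₀).eval (n : ℚ) * SA)
              - ((n : ℚ) + 1) ^ S * ((P t₀).eval ((n : ℚ) + 1) * SB) := by
          rw [hSA, hSB, Finset.mul_sum, Finset.mul_sum, Finset.mul_sum, Finset.mul_sum,
            ← Finset.sum_sub_distrib]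
          apply Finset.sum_congr rfl
          intro u hu
          simp only [eval_mul, eval_sub, eval_pow, eval_add, eval_X, eval_C, sh_eval]
          ring
        have hsecond : ∑ t ∈ Tne, (P t₀ * sh (P t) * (X + C 1) ^ (S - t.headI)).eval (n : ℚ) * H t.tail n
            = ((n : ℚ) + 1) ^ S * ((P t₀).eval (n : ℚ) * SC) := by
          rw [hSC, Finset.mul_sum, Finset.mul_sum]
          apply Finset.sum_congr rfl
          intro t htm
          have hsS : t.headI ≤ S := hheadle t (Finset.mem_of_mem_filter t htm)
          have hpow : ((n : ℚ) + 1) ^ (S - t.headI) * ((n : ℚ) + 1) ^ t.headI = ((n : ℚ) + 1) ^ S := by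
            rw [← pow_add]
            congr 1
            omega
          have e : (1 : ℚ) / (((n : ℚ) + 1) ^ t.headI) * (((n : ℚ) + 1) ^ S)
              = ((n : ℚ) + 1) ^ (S - t.headI) := by
            rw [← hpow]
            field_simp
          simp only [eval_mul, eval_pow, eval_add, eval_X, eval_C, sh_eval]
          linear_combination
            (-((P t₀).eval (n : ℚ) * (P t).eval ((n : ℚ) + 1) * H t.tail n)) * e
        have hSAC : SA + SC = 0 := by rw [← hSDsplit]; exact hA1
        have hSB0 : SB = 0 := hA0
        rw [hfirst, hsecond, hSB0]
        linear_combination ((n : ℚ) + 1) ^ S * (P t₀).eval (n : ℚ) * hSAC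
      -- card bound for the new relation
      have ht₀mem : t₀ ∈ T.filter (fun t => t.length = L + 1 ∧ P t ≠ 0) :=
        Finset.mem_filter.2 ⟨ht₀T, hlen₀, hP₀⟩
      have hcard' : (T'.filter (fun u => u.length = L + 1 ∧ Q u ≠ 0)).card ≤ m - 1 := by
        have hsub : T'.filter (fun u => u.length = L + 1 ∧ Q u ≠ 0) ⊆
            (T.filter (fun t => t.length = L + 1 ∧ P t ≠ 0)).erase t₀ := by
          intro u hu
          rw [Finset.mem_filter] at hu
          obtain ⟨huT', hu2⟩ := hu
          obtain ⟨hulen, hQne⟩ := hu2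
          have hQu : Q u = if u ∈ T then (X + C 1) ^ S * (P t₀ * sh (P u) - sh (P t₀) * P u) else 0 := by
            rw [hQ]
            simp only []
            rw [hfib_empty u hulen, Finset.sum_empty, add_zero]
          by_cases huT : u ∈ T
          · rw [hQu, if_pos huT] at hQne
            have hWne : P t₀ * sh (P u) - sh (P t₀) * P u ≠ 0 :=
              fun h0 => hQne (by rw [h0, mul_zero])
            have hPune : P u ≠ 0 := by
              intro h0
              apply hWne
              rw [h0, sh_zero, mul_zero, mul_zero, sub_zero]
            have hut₀ : u ≠ t₀ := by
              intro h0
              subst h0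
              exact hWne (by ring)
            exact Finset.mem_erase.2 ⟨hut₀, Finset.mem_filter.2 ⟨huT, hulen, hPune⟩⟩
          · rw [hQu, if_neg huT] at hQne
            exact absurd rfl hQne
        calc (T'.filter (fun u => u.length = L + 1 ∧ Q u ≠ 0)).card
            ≤ ((T.filter (fun t => t.length = L + 1 ∧ P t ≠ 0)).erase t₀).card :=
              Finset.card_le_card hsub
          _ = (T.filter (fun t => t.length = L + 1 ∧ P t ≠ 0)).card - 1 :=
              Finset.card_erase_of_mem ht₀mem
          _ ≤ m - 1 := by omega
      have hm1 : 1 ≤ m := le_trans (Finset.card_pos.2 ⟨t₀, ht₀mem⟩) hcard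
      -- apply the inner induction hypothesis
      have hQ0 := ihm (m - 1) (by omega) T' Q N hT'pos hT'len hcard' hrel'
      -- top-length coefficients are proportional to P t₀
      have hprop : ∀ t ∈ T, t.length = L + 1 → ∃ c : ℚ, P t = C c * P t₀ := by
        intro t ht hlent
        have h0 := hQ0 t (hTsubT' ht)
        rw [hQ] at h0
        simp only [] at h0
        rw [hfib_empty t hlent, Finset.sum_empty, add_zero, if_pos ht] at h0
        have hW0 : P t₀ * sh (P t) - sh (P t₀) * P t = 0 := by
          rcases mul_eq_zero.1 h0 with h | h
          · exact absurd h (pow_ne_zero _ (X_add_C_ne_zero 1))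
          · exact h
        apply parallel (P t) (P t₀) hP₀
        rw [sub_eq_zero] at hW0
        linear_combination -hW0
      -- the tail of t₀
      have ht₀ne : t₀ ≠ [] := by
        intro h0
        rw [h0] at hlen₀
        simp at hlen₀
      set u₀ := t₀.tail with hu₀
      have hu₀len : u₀.length = L := by rw [hu₀, List.length_tail, hlen₀]; omega
      have hu₀T' : u₀ ∈ T' := Finset.mem_union_right _
        (Finset.mem_image_of_mem List.tail (Finset.mem_filter.2 ⟨ht₀T, ht₀ne⟩))
      -- the constants
      set cc : ℕ → ℚ := fun s =>
        if (s :: u₀) ∈ T then (P (s :: u₀)).leadingCoeff / (P t₀).leadingCoeff else 0 with hccdef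
      have hcc : ∀ s : ℕ, (s :: u₀) ∈ T → P (s :: u₀) = C (cc s) * P t₀ := by
        intro s hs
        have hlen2 : (s :: u₀).length = L + 1 := by simp [hu₀len]
        obtain ⟨c, hc⟩ := hprop _ hs hlen2
        have hcceq : cc s = c := by
          rw [hccdef]
          simp only [if_pos hs]
          rw [hc, leadingCoeff_mul, leadingCoeff_C]
          field_simp [leadingCoeff_ne_zero.2 hP₀]
        rw [hcceq]
        exact hc
      -- rewrite the fiber over u₀ as a sum over heads
      have hfib0 : Tne.filter (fun t => t.tail = u₀)
          = ((Finset.Icc 1 S).filter (fun s => (s :: u₀) ∈ T)).image (fun s => s :: u₀) := by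
        ext t
        simp only [Finset.mem_filter, Finset.mem_image, Finset.mem_Icc, hTne]
        constructor
        · rintro ⟨⟨htT, htne⟩, htail⟩
          refine ⟨t.headI, ⟨⟨hheadpos t htT htne, hheadle t htT⟩, ?_⟩, ?_⟩
          · rw [show t.headI :: u₀ = t by rw [← htail]; exact headI_cons_tail t htne]
            exact htT
          · rw [← htail]; exact headI_cons_tail t htne
        · rintro ⟨s, ⟨⟨hs1, hs2⟩, hsT⟩, rfl⟩
          exact ⟨⟨hsT, by simp⟩, rfl⟩
      -- the key equation
      set p : ℚ[X] := if u₀ ∈ T then P u₀ else 0 with hpdef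
      have h0 := hQ0 u₀ hu₀T'
      rw [hQ] at h0
      simp only [] at h0
      have hifp : (if u₀ ∈ T then (X + C 1) ^ S * (P t₀ * sh (P u₀) - sh (P t₀) * P u₀) else 0)
          = (X + C 1) ^ S * (P t₀ * sh p - sh (P t₀) * p) := by
        rw [hpdef]
        split_ifs with h
        · rfl
        · rw [sh_zero, mul_zero, mul_zero, sub_zero, mul_zero]
      rw [hifp] at h0
      have hfibsum : ∑ t ∈ Tne.filter (fun t => t.tail = u₀),
            P t₀ * sh (P t) * (X + C 1) ^ (S - t.headI)
          = (∑ s ∈ Finset.Icc 1 S, C (cc s) * (X + C 1) ^ (S - s)) * (P t₀ * sh (P t₀)) := by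
        rw [hfib0, Finset.sum_image (by intro a _ b _ hab; simpa using hab)]
        rw [Finset.sum_filter, Finset.sum_mul]
        apply Finset.sum_congr rfl
        intro s hs
        by_cases hsT : (s :: u₀) ∈ T
        · rw [if_pos hsT]
          have := hcc s hsT
          rw [show (s :: u₀).headI = s from rfl, this, sh_mul, sh_C]
          ring
        · rw [if_neg hsT]
          have hcc0 : cc s = 0 := by rw [hccdef]; simp only [if_neg hsT]
          rw [hcc0, map_zero, zero_mul, zero_mul]
      rw [hfibsum] at h0
      -- apply the key lemma
      have hkeyeq : (sh p * P t₀ - p * sh (P t₀)) * (X + C 1) ^ S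
          = (∑ s ∈ Finset.Icc 1 S, C (-(cc s)) * (X + C 1) ^ (S - s)) * (P t₀ * sh (P t₀)) := by
        have hnegsum : (∑ s ∈ Finset.Icc 1 S, C (-(cc s)) * (X + C 1) ^ (S - s))
            = -(∑ s ∈ Finset.Icc 1 S, C (cc s) * (X + C 1) ^ (S - s)) := by
          rw [← Finset.sum_neg_distrib]
          apply Finset.sum_congr rfl
          intro s _
          rw [map_neg]
          ring
        rw [hnegsum]
        linear_combination h0
      have hcc0all := key S p (P t₀) hP₀ (fun s => -(cc s)) hkeyeq
      -- conclude : the coefficient of t₀ itself is zero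
      have hs₀ : t₀.headI ∈ Finset.Icc 1 S :=
        Finset.mem_Icc.2 ⟨hheadpos t₀ ht₀T ht₀ne, hheadle t₀ ht₀T⟩
      have h1 := hcc0all _ hs₀
      have hcons : t₀.headI :: u₀ = t₀ := headI_cons_tail t₀ ht₀ne
      have h2 := hcc t₀.headI (by rw [hcons]; exact ht₀T)
      rw [hcons] at h2
      have h3 : cc t₀.headI = 0 := by linarith [neg_eq_zero.1 h1]
      rw [h3, map_zero, zero_mul] at h2
      exact hP₀ h2
    · -- no nonzero top-length coefficient : reduce the length bound
      rw [Finset.not_nonempty_iff_eq_empty, Finset.filter_eq_empty_iff] at hfil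
      intro t ht
      by_cases hPt : P t = 0
      · exact hPt
      have hkey := ihL ((T.filter fun u => P u ≠ 0).card) (T.filter fun u => P u ≠ 0) P N
        (fun u hu => hpos u (Finset.mem_of_mem_filter u hu))
        (fun u hu => by
          have huT := (Finset.mem_filter.1 hu).1
          have hPu := (Finset.mem_filter.1 hu).2
          have h1 := hlen u huT
          have h2 : u.length ≠ L + 1 := by
            intro hL
            exact absurd ⟨hL, hPu⟩ (hfil huT)
          omega)
        (Finset.card_filter_le _ _)
        (fun n hn => by
          have hsf := Finset.sum_filter_of_ne (s := T) (p := fun u => P u ≠ 0)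
            (f := fun t => (P t).eval (n : ℚ) * H t n)
            (fun u hu hne hPu => hne (by simp [hPu]))
          exact hsf.trans (hrel n hn))
      exact hkey t (Finset.mem_filter.2 ⟨ht, hPt⟩)

end MHS

/-- the multiple harmonic sums, viewed as arithmetic functions `ℕ → ℚ`
indexed by all compositions of positive integers together with the empty composition,
form a ℚ-linearly independent family in the space of functions `ℕ → ℚ`. -/
theorem harmonic_sums_linearIndependent :
    LinearIndependent ℚ
      (fun l : {l : List ℕ // ∀ x ∈ l, 0 < x} => (fun n : ℕ => H l.1 n)) := by
  classical
  rw [linearIndependent_iff']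
  intro s g hsum i hi
  set T : Finset (List ℕ) := s.image Subtype.val with hT
  set g' : List ℕ → ℚ := fun l => ∑ j ∈ s.filter (fun j => j.1 = l), g j with hg'
  have hfiber : ∀ n : ℕ, ∑ l ∈ T, g' l * H l n = ∑ j ∈ s, g j * H j.1 n := by
    intro n
    have h1 : ∀ l ∈ T, g' l * H l n = ∑ j ∈ s.filter (fun j => j.1 = l), g j * H j.1 n := by
      intro l hl
      rw [hg']
      simp only []
      rw [Finset.sum_mul]
      apply Finset.sum_congr rfl
      intro j hj
      rw [(Finset.mem_filter.1 hj).2]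
    rw [Finset.sum_congr rfl h1]
    exact Finset.sum_fiberwise_of_maps_to (fun j hj => Finset.mem_image_of_mem Subtype.val hj) _
  have hvanish : ∀ n : ℕ, ∑ j ∈ s, g j * H j.1 n = 0 := by
    intro n
    have h2 := congrFun hsum n
    rw [Finset.sum_apply] at h2
    simpa using h2
  have hmain := MHS.main (T.sup List.length) T.card T (fun l => Polynomial.C (g' l)) 0
    (fun t ht => by
      obtain ⟨j, hj, rfl⟩ := Finset.mem_image.1 ht
      exact j.2)
    (fun t ht => Finset.le_sup ht)
    (Finset.card_filter_le _ _)
    (fun n _ => by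
      simp only [Polynomial.eval_C]
      rw [hfiber n]
      exact hvanish n)
  have hiT : i.1 ∈ T := Finset.mem_image_of_mem Subtype.val hi
  have h3 := hmain i.1 hiT
  have h4 : g' i.1 = 0 := by
    have := congrArg (fun f => Polynomial.coeff f 0) h3
    simpa using this
  rw [hg'] at h4
  simp only [] at h4
  have hfil : s.filter (fun j => j.1 = i.1) = {i} := by
    ext j
    simp only [Finset.mem_filter, Finset.mem_singleton]
    constructor
    · rintro ⟨hjs, hji⟩
      exact Subtype.ext hji
    · rintro rfl
      exact ⟨hi, rfl⟩
  rw [hfil, Finset.sum_singleton] at h4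
  exact h4
end
end

section
/- The finite part of the divergent harmonic sum H_{1,2}: the sequence H_{1,2}(n) − ζ(2)·log n converges as n → ∞, and its limit equals ζ(2)·γ − 2·ζ(3). -/
/-- The zeta value `ζ(k) = Σ_{n≥1} 1/n^k`. -/
noncomputable def zeta (k : ℕ) : ℝ := ∑' n : ℕ, (1 : ℝ) / ((n : ℝ) + 1) ^ k

open Filter Finset Function Topology

namespace FPAux

noncomputable def q (n : ℕ) : ℝ := 1 / ((n : ℝ) + 1) ^ 2
noncomputable def g (n : ℕ) : ℝ := 1 / ((n : ℝ) + 1)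
noncomputable def r (m : ℕ) : ℝ := ∑' k : ℕ, q (k + m)

lemma q_nonneg (n : ℕ) : 0 ≤ q n := by unfold q; positivity
lemma g_nonneg (n : ℕ) : 0 ≤ g n := by unfold g; positivity

lemma q_eq (n : ℕ) : q n = g n * g n := by
  unfold q g; rw [pow_two, div_mul_div_comm, one_mul]

lemma summable_q : Summable q := by
  have h : Summable (fun n : ℕ => 1 / (n : ℝ) ^ 2) :=
    Real.summable_one_div_nat_pow.mpr one_lt_two
  have h2 := (summable_nat_add_iff 1).mpr h
  refine h2.congr fun n => ?_
  unfold q; push_cast; ring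

lemma summable_q_add (m : ℕ) : Summable (fun k => q (k + m)) :=
  (summable_nat_add_iff m).mpr summable_q

lemma r_nonneg (m : ℕ) : 0 ≤ r m := tsum_nonneg fun k => q_nonneg _

lemma tendsto_g : Tendsto g atTop (𝓝 0) := by
  have := tendsto_one_div_add_atTop_nhds_zero_nat (𝕜 := ℝ)
  exact this.congr fun n => rfl

/-- partial sums of lagged differences -/
lemma sum_sub_shift (u : ℕ → ℝ) (L N : ℕ) :
    ∑ k ∈ range N, (u k - u (k + L)) =
      ∑ i ∈ range L, u i - ∑ j ∈ range L, u (N + j) := by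
  have h1 := Finset.sum_range_add u N L
  have h2 := Finset.sum_range_add u L N
  rw [Nat.add_comm L N] at h2
  have h3 : ∑ k ∈ range N, u (k + L) = ∑ j ∈ range N, u (L + j) := by
    refine Finset.sum_congr rfl fun k _ => by rw [Nat.add_comm]
  rw [Finset.sum_sub_distrib, h3]
  linarith

lemma tele (u : ℕ → ℝ) (hu : Tendsto u atTop (𝓝 0)) (L : ℕ)
    (hs : Summable fun k => u k - u (k + L)) :
    ∑' k, (u k - u (k + L)) = ∑ i ∈ range L, u i := by
  have h1 := hs.hasSum.tendsto_sum_nat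
  have h2 : Tendsto (fun N => ∑ k ∈ range N, (u k - u (k + L))) atTop
      (𝓝 (∑ i ∈ range L, u i - 0)) := by
    simp_rw [sum_sub_shift]
    refine tendsto_const_nhds.sub ?_
    have : Tendsto (fun N : ℕ => ∑ j ∈ range L, u (N + j)) atTop
        (𝓝 (∑ j ∈ range L, (0 : ℝ))) := by
      refine tendsto_finset_sum _ fun j _ => ?_
      exact hu.comp (tendsto_add_atTop_nat j)
    simpa using this
  rw [sub_zero] at h2
  exact tendsto_nhds_unique h1 h2


/-- difference of consecutive g's is ≤ q -/
lemma g_sub_le (k m : ℕ) : g (k + m) - g (k + m + 1) ≤ q k := by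
  unfold g q
  have hk : (0:ℝ) ≤ (k:ℝ) := Nat.cast_nonneg k
  have hm : (0:ℝ) ≤ (m:ℝ) := Nat.cast_nonneg m
  push_cast
  have h1 : 1/((k:ℝ)+(m:ℝ)+1) - 1/((k:ℝ)+(m:ℝ)+1+1)
      = 1/(((k:ℝ)+(m:ℝ)+1)*((k:ℝ)+(m:ℝ)+2)) := by
    rw [div_sub_div _ _ (by positivity : ((k:ℝ)+(m:ℝ)+1) ≠ 0) (by positivity : ((k:ℝ)+(m:ℝ)+1+1) ≠ 0)]
    norm_num
    left; ring
  rw [h1]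
  refine one_div_le_one_div_of_le (by positivity) ?_
  nlinarith

lemma g_sub_nonneg (k m : ℕ) : 0 ≤ g (k + m) - g (k + m + 1) := by
  unfold g
  have hk : (0:ℝ) ≤ (k:ℝ) := Nat.cast_nonneg k
  have hm : (0:ℝ) ≤ (m:ℝ) := Nat.cast_nonneg m
  push_cast
  rw [sub_nonneg]
  exact one_div_le_one_div_of_le (by positivity) (by linarith)

lemma summable_g_sub (m : ℕ) : Summable fun k => g (k + m) - g (k + m + 1) :=
  Summable.of_nonneg_of_le (fun k => g_sub_nonneg k m) (fun k => g_sub_le k m) summable_q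

lemma tele_one (m : ℕ) : ∑' k, (g (k + m) - g (k + m + 1)) = g m := by
  have hu : Tendsto (fun k => g (k + m)) atTop (𝓝 0) :=
    tendsto_g.comp (tendsto_add_atTop_nat m)
  have hs : Summable fun k => (fun k => g (k + m)) k - (fun k => g (k + m)) (k + 1) := by
    refine (summable_g_sub m).congr fun k => ?_
    show g (k + m) - g (k + m + 1) = g (k + m) - g (k + 1 + m)
    rw [Nat.add_right_comm]
  have := tele (fun k => g (k + m)) hu 1 hs
  simp only [Finset.range_one, Finset.sum_singleton, Nat.zero_add] at this
  rw [← this]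
  refine tsum_congr fun k => ?_
  show g (k + m) - g (k + m + 1) = g (k + m) - g (k + 1 + m)
  rw [Nat.add_right_comm]

lemma q_le_two_gsub (k m : ℕ) : q (k + m) ≤ 2 * (g (k + m) - g (k + m + 1)) := by
  unfold g q
  have hk : (0:ℝ) ≤ (k:ℝ) := Nat.cast_nonneg k
  have hm : (0:ℝ) ≤ (m:ℝ) := Nat.cast_nonneg m
  push_cast
  have h1 : 1/((k:ℝ)+(m:ℝ)+1) - 1/((k:ℝ)+(m:ℝ)+1+1)
      = 1/(((k:ℝ)+(m:ℝ)+1)*((k:ℝ)+(m:ℝ)+2)) := by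
    rw [div_sub_div _ _ (by positivity : ((k:ℝ)+(m:ℝ)+1) ≠ 0) (by positivity : ((k:ℝ)+(m:ℝ)+1+1) ≠ 0)]
    norm_num
    left; ring
  rw [h1, mul_one_div, div_le_div_iff₀ (by positivity) (by positivity)]
  nlinarith

lemma r_le (m : ℕ) : r m ≤ 2 * g m := by
  have h := Summable.tsum_le_tsum (fun k => q_le_two_gsub k m) (summable_q_add m)
    ((summable_g_sub m).mul_left 2)
  rw [tsum_mul_left, tele_one] at h
  exact h

lemma r_succ (m : ℕ) : r m = q m + r (m + 1) := by
  have h := (Summable.sum_add_tsum_nat_add 1 (summable_q_add m)).symm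
  simp only [Finset.range_one, Finset.sum_singleton] at h
  unfold r
  rw [h]
  congr 1
  · norm_num
  · refine tsum_congr fun k => ?_
    rw [show k + 1 + m = k + (m + 1) by omega]

noncomputable def T : ℕ × ℕ → ℝ := fun p => g p.1 * q (p.2 + p.1)
noncomputable def F : ℕ × ℕ → ℝ := fun p => g p.1 * q (p.2 + p.1 + 1)
noncomputable def G : ℕ × ℕ → ℝ := fun p => g p.1 * g p.2 * g (p.1 + p.2 + 1)

lemma T_nonneg (p : ℕ × ℕ) : 0 ≤ T p := mul_nonneg (g_nonneg _) (q_nonneg _)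
lemma F_nonneg (p : ℕ × ℕ) : 0 ≤ F p := mul_nonneg (g_nonneg _) (q_nonneg _)

lemma summable_T_row (m : ℕ) : Summable fun k => T (m, k) :=
  (summable_q_add m).mul_left (g m)

lemma T_row (m : ℕ) : ∑' k, T (m, k) = g m * r m := by
  unfold T r
  show ∑' k, g m * q (k + m) = g m * ∑' k, q (k + m)
  exact tsum_mul_left

lemma summable_F_row (m : ℕ) : Summable fun k => F (m, k) := by
  refine ((summable_q_add (m+1)).mul_left (g m)).congr fun k => ?_
  show g m * q (k + (m+1)) = F (m, k)
  unfold F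
  rw [show k + (m + 1) = k + m + 1 by omega]

lemma F_row (m : ℕ) : ∑' k, F (m, k) = g m * r (m + 1) := by
  unfold F r
  show ∑' k, g m * q (k + m + 1) = g m * ∑' k, q (k + (m + 1))
  rw [tsum_mul_left]
  congr 1

lemma grm_le (m : ℕ) : g m * r m ≤ 2 * q m := by
  calc g m * r m ≤ g m * (2 * g m) :=
        mul_le_mul_of_nonneg_left (r_le m) (g_nonneg m)
    _ = 2 * q m := by rw [q_eq]; ring

lemma summable_gr : Summable fun m => g m * r m :=
  Summable.of_nonneg_of_le (fun m => mul_nonneg (g_nonneg m) (r_nonneg m)) grm_le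
    (summable_q.mul_left 2)

lemma summable_T : Summable T := by
  refine (summable_prod_of_nonneg T_nonneg).mpr ⟨summable_T_row, ?_⟩
  exact summable_gr.congr fun m => (T_row m).symm

lemma q_succ_le (n : ℕ) : q (n + 1) ≤ q n := by
  unfold q
  push_cast
  refine one_div_le_one_div_of_le (by positivity) ?_
  have : (0:ℝ) ≤ (n:ℝ) := Nat.cast_nonneg n
  nlinarith

lemma summable_F : Summable F := by
  refine Summable.of_nonneg_of_le F_nonneg (fun p => ?_) summable_T
  exact mul_le_mul_of_nonneg_left (q_succ_le _) (g_nonneg _)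

lemma summable_Fsw : Summable fun p : ℕ × ℕ => F p.swap :=
  (Equiv.prodComm ℕ ℕ).summable_iff.mpr summable_F

lemma tsum_Fsw : ∑' p : ℕ × ℕ, F p.swap = ∑' p, F p :=
  (Equiv.prodComm ℕ ℕ).tsum_eq F

lemma G_eq (p : ℕ × ℕ) : G p = F p + F p.swap := by
  obtain ⟨m, k⟩ := p
  show g m * g k * g (m + k + 1) = g m * q (k + m + 1) + g k * q (m + k + 1)
  unfold g q
  have h1 : ((m:ℝ)+1) ≠ 0 := by positivity
  have h2 : ((k:ℝ)+1) ≠ 0 := by positivity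
  have h3 : ((m:ℝ)+(k:ℝ)+2) ≠ 0 := by positivity
  have h4 : ((m:ℝ)+(k:ℝ)+1+1) ≠ 0 := fun h => h3 (by linarith)
  have h5 : ((k:ℝ)+(m:ℝ)+1+1) ≠ 0 := fun h => h3 (by linarith)
  push_cast
  field_simp
  ring

lemma summable_G : Summable G :=
  (summable_F.add summable_Fsw).congr fun p => (G_eq p).symm

lemma tsum_G : ∑' p, G p = 2 * ∑' p, F p := by
  calc ∑' p, G p = ∑' p : ℕ × ℕ, (F p + F p.swap) := tsum_congr G_eq
    _ = ∑' p, F p + ∑' p : ℕ × ℕ, F p.swap := Summable.tsum_add summable_F summable_Fsw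
    _ = 2 * ∑' p, F p := by rw [tsum_Fsw]; ring

lemma g_sub_L_nonneg (L k : ℕ) : 0 ≤ g k - g (k + L) := by
  unfold g
  have hk : (0:ℝ) ≤ (k:ℝ) := Nat.cast_nonneg k
  have hL : (0:ℝ) ≤ (L:ℝ) := Nat.cast_nonneg L
  push_cast
  rw [sub_nonneg]
  exact one_div_le_one_div_of_le (by positivity) (by linarith)

lemma g_sub_L_le (L k : ℕ) : g k - g (k + L) ≤ (L : ℝ) * q k := by
  unfold g q
  have hk : (0:ℝ) ≤ (k:ℝ) := Nat.cast_nonneg k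
  have hL : (0:ℝ) ≤ (L:ℝ) := Nat.cast_nonneg L
  push_cast
  have h1 : 1/((k:ℝ)+1) - 1/((k:ℝ)+(L:ℝ)+1)
      = (L:ℝ)/(((k:ℝ)+1)*((k:ℝ)+(L:ℝ)+1)) := by
    rw [div_sub_div _ _ (by positivity : ((k:ℝ)+1) ≠ 0)
      (by positivity : ((k:ℝ)+(L:ℝ)+1) ≠ 0)]
    congr 1
    ring
  rw [h1, mul_one_div, div_le_div_iff₀ (by positivity) (by positivity)]
  have h2 : ((k:ℝ)+1)^2 ≤ ((k:ℝ)+1)*((k:ℝ)+(L:ℝ)+1) := by nlinarith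
  nlinarith [mul_le_mul_of_nonneg_left h2 hL]

lemma summable_g_sub_L (L : ℕ) : Summable fun k => g k - g (k + L) :=
  Summable.of_nonneg_of_le (g_sub_L_nonneg L) (g_sub_L_le L)
    (summable_q.mul_left (L : ℝ))

lemma tele_L (L : ℕ) : ∑' k, (g k - g (k + L)) = ∑ i ∈ range L, g i :=
  tele g tendsto_g L (summable_g_sub_L L)

/-- row decomposition of `G` -/
lemma G_row_eq (m k : ℕ) : G (m, k) = q m * (g k - g (k + (m + 1))) := by
  show g m * g k * g (m + k + 1) = q m * (g k - g (k + (m + 1)))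
  unfold g q
  have h1 : ((m:ℝ)+1) ≠ 0 := by positivity
  have h2 : ((k:ℝ)+1) ≠ 0 := by positivity
  have h3 : ((m:ℝ)+(k:ℝ)+1+1) ≠ 0 := by positivity
  have h4 : ((k:ℝ)+((m:ℝ)+1)+1) ≠ 0 := by positivity
  push_cast
  field_simp
  ring

lemma summable_G_row (m : ℕ) : Summable fun k => G (m, k) := by
  refine ((summable_g_sub_L (m+1)).mul_left (q m)).congr fun k => ?_
  exact (G_row_eq m k).symm

lemma G_row_sum (m : ℕ) : ∑' k, G (m, k) = q m * ∑ i ∈ range (m+1), g i := by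
  calc ∑' k, G (m, k) = ∑' k, q m * (g k - g (k + (m+1))) := tsum_congr (G_row_eq m)
    _ = q m * ∑' k, (g k - g (k + (m+1))) := tsum_mul_left
    _ = q m * ∑ i ∈ range (m+1), g i := by rw [tele_L]

lemma tsum_G_eval : ∑' p, G p = ∑' m, q m * ∑ i ∈ range (m+1), g i := by
  rw [Summable.tsum_prod' summable_G summable_G_row]
  exact tsum_congr G_row_sum

/-- triangular version of `T` -/
noncomputable def T' : ℕ × ℕ → ℝ := fun p => if p.2 ≤ p.1 then q p.1 * g p.2 else 0

def e : ℕ × ℕ → ℕ × ℕ := fun p => (p.2 + p.1, p.1)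

lemma e_inj : Function.Injective e := by
  rintro ⟨m, k⟩ ⟨m', k'⟩ h
  simp only [e, Prod.mk.injEq] at h
  exact Prod.ext (by omega) (by omega)

lemma e_supp : Function.support T' ⊆ Set.range e := by
  rintro ⟨j, i⟩ hji
  have hij : i ≤ j := by
    by_contra hc
    exact hji (if_neg hc)
  exact ⟨(i, j - i), by simp only [e]; exact Prod.ext (by omega) rfl⟩

lemma T'_comp (p : ℕ × ℕ) : T' (e p) = T p := by
  obtain ⟨m, k⟩ := p
  show (if m ≤ k + m then q (k + m) * g m else 0) = g m * q (k + m)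
  rw [if_pos (Nat.le_add_left m k)]
  ring

lemma e_supp' : ∀ x ∉ Set.range e, T' x = 0 := fun x hx => by
  by_contra h
  exact hx (e_supp h)

lemma summable_T' : Summable T' :=
  (e_inj.summable_iff e_supp').mp (summable_T.congr fun p => (T'_comp p).symm)

lemma tsum_T'_eq : ∑' p, T' p = ∑' p, T p := by
  rw [← e_inj.tsum_eq e_supp]
  exact tsum_congr T'_comp

lemma summable_T'_row (j : ℕ) : Summable fun i => T' (j, i) := by
  refine summable_of_ne_finset_zero (s := Finset.range (j+1)) fun i hi => ?_
  have : ¬ i ≤ j := by simpa using fun h => hi (Finset.mem_range.mpr (Nat.lt_succ_of_le h))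
  exact if_neg this

lemma T'_vanish (j : ℕ) : ∀ i ∉ Finset.range (j+1), T' (j, i) = 0 := fun i hi => by
  have hle : ¬ i ≤ j := fun h => hi (Finset.mem_range.mpr (Nat.lt_succ_of_le h))
  exact if_neg hle

lemma T'_row_sum (j : ℕ) : ∑' i, T' (j, i) = q j * ∑ i ∈ range (j+1), g i := by
  rw [tsum_eq_sum (T'_vanish j), Finset.mul_sum]
  refine Finset.sum_congr rfl fun i hi => ?_
  exact if_pos (Nat.lt_succ_iff.mp (Finset.mem_range.mp hi))

lemma tsum_T_eval : ∑' p, T p = ∑' m, q m * ∑ i ∈ range (m+1), g i := by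
  rw [← tsum_T'_eq, Summable.tsum_prod' summable_T' summable_T'_row]
  exact tsum_congr T'_row_sum

lemma g_le_one (m : ℕ) : g m ≤ 1 := by
  unfold g
  rw [div_le_one (by positivity)]
  have : (0:ℝ) ≤ (m:ℝ) := Nat.cast_nonneg m
  linarith

lemma summable_gq : Summable fun m => g m * q m := by
  refine Summable.of_nonneg_of_le (fun m => mul_nonneg (g_nonneg m) (q_nonneg m))
    (fun m => ?_) summable_q
  calc g m * q m ≤ 1 * q m := mul_le_mul_of_nonneg_right (g_le_one m) (q_nonneg m)
    _ = q m := one_mul _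

lemma r_succ_le (m : ℕ) : r (m + 1) ≤ r m := by
  rw [r_succ m]
  have := q_nonneg m
  linarith

lemma summable_grs : Summable fun m => g m * r (m + 1) := by
  refine Summable.of_nonneg_of_le
    (fun m => mul_nonneg (g_nonneg m) (r_nonneg (m+1))) (fun m => ?_) summable_gr
  exact mul_le_mul_of_nonneg_left (r_succ_le m) (g_nonneg m)

lemma tsum_F_eval : ∑' p, F p = ∑' m, g m * r (m + 1) := by
  rw [Summable.tsum_prod' summable_F summable_F_row]
  exact tsum_congr F_row

lemma zeta3_eq : zeta 3 = ∑' m, g m * q m := by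
  unfold zeta
  refine tsum_congr fun m => ?_
  unfold g q
  rw [div_mul_div_comm, one_mul, ← pow_succ']

lemma A_split : ∑' m, g m * r m = zeta 3 + ∑' p, F p := by
  rw [zeta3_eq, tsum_F_eval, ← Summable.tsum_add summable_gq summable_grs]
  refine tsum_congr fun m => ?_
  rw [r_succ m]
  ring

lemma A_eq_two_U : ∑' m, g m * r m = 2 * ∑' p, F p := by
  have h1 : ∑' m, g m * r m = ∑' p, T p := by
    rw [Summable.tsum_prod' summable_T summable_T_row]
    exact tsum_congr fun m => (T_row m).symm
  rw [h1, tsum_T_eval, ← tsum_G_eval, tsum_G]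

lemma A_eq : ∑' m, g m * r m = 2 * zeta 3 := by
  have h1 := A_eq_two_U
  have h2 := A_split
  linarith

end FPAux

namespace FPAux

lemma H2_cast (j : ℕ) : ((H [2] j : ℚ) : ℝ) = ∑ i ∈ Finset.range j, q i := by
  have h2 : H [2] j = ∑ m ∈ Finset.Icc 1 j, (1 / (m : ℚ) ^ 2) := by
    show (∑ m ∈ Finset.Icc 1 j, (1 / (m : ℚ) ^ 2) * H [] (m - 1)) = _
    exact Finset.sum_congr rfl fun m _ => by rw [show H [] (m-1) = 1 from rfl, mul_one]
  rw [h2]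
  push_cast
  rw [← Finset.Ico_add_one_right_eq_Icc, Finset.sum_Ico_eq_sum_range]
  rw [show j + 1 - 1 = j from rfl]
  refine Finset.sum_congr rfl fun i _ => ?_
  unfold q
  push_cast
  ring_nf

lemma H12_cast (n : ℕ) :
    ((H [1, 2] n : ℚ) : ℝ) = ∑ i ∈ Finset.range n, g i * (∑ k ∈ Finset.range i, q k) := by
  have h2 : ((H [1, 2] n : ℚ) : ℝ)
      = ∑ m ∈ Finset.Icc 1 n, (1 / (m : ℝ)) * ((H [2] (m - 1) : ℚ) : ℝ) := by
    show (((∑ m ∈ Finset.Icc 1 n, (1 / (m : ℚ) ^ 1) * H [2] (m - 1) : ℚ)) : ℝ) = _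
    push_cast
    simp only [one_div, pow_one]
  rw [h2, ← Finset.Ico_add_one_right_eq_Icc, Finset.sum_Ico_eq_sum_range]
  rw [show n + 1 - 1 = n from rfl]
  refine Finset.sum_congr rfl fun i _ => ?_
  rw [show 1 + i - 1 = i by omega, H2_cast]
  congr 1
  unfold g
  push_cast
  ring_nf

lemma range_q_eq (i : ℕ) : ∑ k ∈ Finset.range i, q k = zeta 2 - r i := by
  have h := Summable.sum_add_tsum_nat_add i summable_q
  have hz : zeta 2 = ∑' k, q k := rfl
  have hr : r i = ∑' k, q (k + i) := rfl
  rw [hz, hr]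
  linarith

end FPAux

open FPAux

/-- finite part of the divergent harmonic sum `H_{1,2}`: the sequence
`H_{1,2}(n) − ζ(2)·log n` converges as `n → ∞`, with limit `ζ(2)·γ − 2·ζ(3)`,
where `γ` is the Euler–Mascheroni constant. -/
theorem finitePart_H_one_two :
    Filter.Tendsto (fun n : ℕ => (H [1, 2] n : ℝ) - zeta 2 * Real.log n)
      Filter.atTop
      (nhds (zeta 2 * Real.eulerMascheroniConstant - 2 * zeta 3)) := by
  have hexpr : ∀ n : ℕ, (H [1, 2] n : ℝ) - zeta 2 * Real.log n
      = zeta 2 * (((harmonic n : ℚ) : ℝ) - Real.log n)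
        - ∑ i ∈ Finset.range n, g i * r i := by
    intro n
    rw [H12_cast]
    have hh : ((harmonic n : ℚ) : ℝ) = ∑ i ∈ Finset.range n, g i := by
      unfold harmonic
      push_cast
      exact Finset.sum_congr rfl fun i _ => by unfold g; rw [one_div]
    have hterm : ∑ i ∈ Finset.range n, g i * (∑ k ∈ Finset.range i, q k)
        = zeta 2 * ∑ i ∈ Finset.range n, g i - ∑ i ∈ Finset.range n, g i * r i := by
      rw [Finset.mul_sum, ← Finset.sum_sub_distrib]
      refine Finset.sum_congr rfl fun i _ => ?_
      rw [range_q_eq]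
      ring
    rw [hterm, hh]
    ring
  have h1 : Filter.Tendsto
      (fun n : ℕ => zeta 2 * (((harmonic n : ℚ) : ℝ) - Real.log n)) Filter.atTop
      (nhds (zeta 2 * Real.eulerMascheroniConstant)) :=
    Real.tendsto_harmonic_sub_log.const_mul (zeta 2)
  have h2 : Filter.Tendsto (fun n : ℕ => ∑ i ∈ Finset.range n, g i * r i)
      Filter.atTop (nhds (2 * zeta 3)) := by
    have h := summable_gr.hasSum.tendsto_sum_nat
    rw [A_eq] at h
    exact h
  simp only [hexpr]
  exact h1.sub h2
end

section
/- The finite part of the divergent harmonic sum H_{1,1}: the sequence H_{1,1}(n) − (1/2)·(log n)² − γ·log n converges as n → ∞, and its limit equals (γ² − ζ(2))/2. -/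
lemma H_one_eq (n : ℕ) : H [1] n = harmonic n := by
  rw [H, harmonic_eq_sum_Icc]
  refine Finset.sum_congr rfl fun m _ => ?_
  simp [H]

lemma H_one_one_eq (n : ℕ) :
    H [1, 1] n = ((harmonic n) ^ 2 - ∑ m ∈ Finset.Icc 1 n, 1 / (m : ℚ) ^ 2) / 2 := by
  induction n with
  | zero => simp [H]
  | succ n ih =>
    have hstep : ∀ m : ℕ, H [1, 1] m
        = ∑ k ∈ Finset.Icc 1 m, (1 / (k : ℚ) ^ 1) * H [1] (k - 1) := fun m => rfl
    have h1 : H [1, 1] (n + 1) = H [1, 1] n + (1 / ((n : ℚ) + 1)) * harmonic n := by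
      rw [hstep (n + 1), Finset.sum_Icc_succ_top (by omega), ← hstep n,
        Nat.add_sub_cancel, H_one_eq]
      push_cast
      ring_nf
    rw [h1, ih, Finset.sum_Icc_succ_top (by omega), harmonic_succ]
    have hne : ((n : ℚ) + 1) ≠ 0 := by positivity
    push_cast
    field_simp
    ring

lemma sum_sq_tendsto :
    Filter.Tendsto (fun n : ℕ => ∑ m ∈ Finset.Icc 1 n, (1 : ℝ) / (m : ℝ) ^ 2)
      Filter.atTop (nhds (zeta 2)) := by
  have hsum : Summable (fun i : ℕ => (1 : ℝ) / ((i : ℝ) + 1) ^ 2) := by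
    have := (summable_nat_add_iff (f := fun n : ℕ => (1 : ℝ) / (n : ℝ) ^ 2) 1).mpr
      (Real.summable_one_div_nat_pow.mpr one_lt_two)
    simpa using this
  have := hsum.hasSum.tendsto_sum_nat
  refine this.congr fun n => ?_
  rw [Finset.range_eq_Ico, Finset.sum_Ico_eq_sum_range]
  rw [show Finset.Icc 1 n = Finset.Ico 1 (n + 1) by rfl, Finset.sum_Ico_eq_sum_range]
  simp only [Nat.add_sub_cancel]
  refine Finset.sum_congr rfl fun i _ => ?_
  push_cast
  ring_nf

/-- finite part of the divergent harmonic sum `H_{1,1}`: the sequence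
`H_{1,1}(n) − (1/2)·(log n)² − γ·log n` converges as `n → ∞`, with limit
`(γ² − ζ(2))/2`, where `γ` is the Euler–Mascheroni constant. -/
theorem finitePart_H_one_one :
    Filter.Tendsto
      (fun n : ℕ => (H [1, 1] n : ℝ) - (1 / 2) * Real.log n ^ 2
        - Real.eulerMascheroniConstant * Real.log n)
      Filter.atTop
      (nhds ((Real.eulerMascheroniConstant ^ 2 - zeta 2) / 2)) := by
  set γ := Real.eulerMascheroniConstant
  set e : ℕ → ℝ := fun n => (harmonic n : ℝ) - Real.log n - γ with he
  have etend : Filter.Tendsto e Filter.atTop (nhds 0) := by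
    have := Real.tendsto_harmonic_sub_log.sub_const γ
    rwa [show Real.eulerMascheroniConstant - γ = 0 from sub_self _] at this
  -- bound: for n ≥ 1, 0 ≤ e n ≤ 1/n
  have ebound : ∀ n : ℕ, 1 ≤ n → 0 ≤ e n ∧ e n ≤ 1 / n := by
    intro n hn
    have hn0 : (0 : ℝ) < n := by exact_mod_cast hn
    constructor
    · have := Real.eulerMascheroniConstant_lt_eulerMascheroniSeq' n
      rw [Real.eulerMascheroniSeq', if_neg (by omega)] at this
      simp only [he]
      linarith
    · have hlt := Real.eulerMascheroniSeq_lt_eulerMascheroniConstant n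
      rw [Real.eulerMascheroniSeq] at hlt
      have hlog : Real.log ((n : ℝ) + 1) - Real.log n ≤ 1 / n := by
        rw [← Real.log_div (by positivity) (by positivity)]
        have := Real.log_le_sub_one_of_pos (x := ((n : ℝ) + 1) / n) (by positivity)
        calc Real.log (((n : ℝ) + 1) / n) ≤ ((n : ℝ) + 1) / n - 1 := this
          _ = 1 / n := by field_simp; ring
      simp only [he]
      linarith
  -- log n * e n → 0
  have Le : Filter.Tendsto (fun n : ℕ => Real.log n * e n) Filter.atTop (nhds 0) := by
    have hupper : Filter.Tendsto (fun n : ℕ => Real.log n / n) Filter.atTop (nhds 0) :=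
      (Real.isLittleO_log_id_atTop.tendsto_div_nhds_zero).comp tendsto_natCast_atTop_atTop
    refine squeeze_zero' ?_ ?_ hupper
    · filter_upwards [Filter.eventually_ge_atTop 1] with n hn
      have hn0 : (0 : ℝ) ≤ Real.log n := Real.log_natCast_nonneg n
      exact mul_nonneg hn0 (ebound n hn).1
    · filter_upwards [Filter.eventually_ge_atTop 1] with n hn
      have hn0 : (0 : ℝ) ≤ Real.log n := Real.log_natCast_nonneg n
      have := (ebound n hn).2
      calc Real.log n * e n ≤ Real.log n * (1 / n) := by
            exact mul_le_mul_of_nonneg_left this hn0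
        _ = Real.log n / n := by ring
  have h2tend := sum_sq_tendsto
  -- combine
  have main : Filter.Tendsto
      (fun n : ℕ => (γ ^ 2 - ∑ m ∈ Finset.Icc 1 n, (1 : ℝ) / (m : ℝ) ^ 2) / 2
        + γ * e n + e n ^ 2 / 2 + Real.log n * e n)
      Filter.atTop (nhds ((γ ^ 2 - zeta 2) / 2)) := by
    have := (((((tendsto_const_nhds (x := γ ^ 2)).sub h2tend).div_const 2).add
      ((tendsto_const_nhds (x := γ)).mul etend)).add
      ((etend.pow 2).div_const 2)).add Le
    simpa using this
  refine main.congr fun n => ?_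
  have hH : (H [1, 1] n : ℝ)
      = (((harmonic n : ℝ)) ^ 2 - ∑ m ∈ Finset.Icc 1 n, (1 : ℝ) / (m : ℝ) ^ 2) / 2 := by
    rw [H_one_one_eq]
    push_cast
    rfl
  rw [hH]
  simp only [he]
  ring
end

section
/- The finite part of the divergent harmonic sum H_{1,1,1}: the sequence H_{1,1,1}(n) − (1/6)·(log n)³ − (γ/2)·(log n)² − ((γ² − ζ(2))/2)·log n converges as n → ∞, and its limit equals (γ³ − 3·ζ(2)·γ + 2·ζ(3))/6. -/
open Filter Topology Finset

namespace FinitePartAux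

/-- Partial sums of `1/m^k` (rational). -/
def p (k n : ℕ) : ℚ := ∑ i ∈ Finset.range n, 1 / ((i : ℚ) + 1) ^ k

lemma H_cons_succ (s : ℕ) (t : List ℕ) (n : ℕ) :
    H (s :: t) (n + 1) = H (s :: t) n + (1 / ((n : ℚ) + 1) ^ s) * H t n := by
  show (∑ m ∈ Finset.Icc 1 (n+1), (1 / (m : ℚ) ^ s) * H t (m - 1)) = _
  rw [Finset.sum_Icc_succ_top (by omega)]
  push_cast
  simp [H]

lemma H_zero (t : List ℕ) (ht : t ≠ []) : H t 0 = 0 := by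
  cases t with
  | nil => simp at ht
  | cons s t => simp [H]

lemma H1 (n : ℕ) : H [1] n = p 1 n := by
  induction n with
  | zero => simp [H_zero, p]
  | succ n ih => rw [H_cons_succ, ih, p, p, Finset.sum_range_succ]; simp [H]

lemma H11 (n : ℕ) : 2 * H [1, 1] n = p 1 n ^ 2 - p 2 n := by
  induction n with
  | zero => simp [H_zero, p]
  | succ n ih =>
    rw [H_cons_succ, H1, mul_add]
    simp only [p, Finset.sum_range_succ, ← one_div_pow] at ih ⊢
    linear_combination ih

lemma H111 (n : ℕ) : 6 * H [1, 1, 1] n = p 1 n ^ 3 - 3 * p 1 n * p 2 n + 2 * p 3 n := by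
  induction n with
  | zero => simp [H_zero, p]
  | succ n ih =>
    have h2 := H11 n
    rw [H_cons_succ, mul_add]
    simp only [p, Finset.sum_range_succ, ← one_div_pow] at ih h2 ⊢
    linear_combination ih + (3 * (1 / ((n : ℚ) + 1))) * h2

/-- Partial sums of `1/m^k` (real). -/
noncomputable def pR (k n : ℕ) : ℝ := ∑ i ∈ Finset.range n, 1 / ((i : ℝ) + 1) ^ k

lemma p_cast (k n : ℕ) : ((p k n : ℚ) : ℝ) = pR k n := by
  rw [p, pR]; push_cast; rfl

lemma summable_aux (k : ℕ) (hk : 2 ≤ k) : Summable (fun i : ℕ => 1 / ((i : ℝ) + 1) ^ k) := by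
  have h := Real.summable_one_div_nat_pow.mpr hk
  have := (summable_nat_add_iff (f := fun n : ℕ => 1 / (n : ℝ) ^ k) 1).mpr h
  refine this.congr fun i => by push_cast; ring

lemma tendsto_pR (k : ℕ) (hk : 2 ≤ k) :
    Tendsto (fun n => pR k n) atTop (𝓝 (zeta k)) :=
  (summable_aux k hk).hasSum.tendsto_sum_nat

lemma harmonic_cast (n : ℕ) : ((harmonic n : ℚ) : ℝ) = pR 1 n := by
  rw [harmonic, pR]
  push_cast
  exact Finset.sum_congr rfl fun i _ => by rw [pow_one, one_div]

/-- `e n = H_n - log n`. -/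
noncomputable def e (n : ℕ) : ℝ := pR 1 n - Real.log n

lemma tendsto_e : Tendsto e atTop (𝓝 Real.eulerMascheroniConstant) := by
  refine Real.tendsto_harmonic_sub_log.congr fun n => ?_
  rw [e, harmonic_cast]

lemma e_sub_gamma_bounds {n : ℕ} (hn : 1 ≤ n) :
    0 ≤ e n - Real.eulerMascheroniConstant ∧ e n - Real.eulerMascheroniConstant ≤ 1 / n := by
  have hn0 : (0:ℝ) < n := by exact_mod_cast hn
  have h1 := Real.eulerMascheroniSeq_lt_eulerMascheroniConstant n
  have h2 := Real.eulerMascheroniConstant_lt_eulerMascheroniSeq' n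
  rw [Real.eulerMascheroniSeq] at h1
  rw [Real.eulerMascheroniSeq', if_neg (by omega)] at h2
  rw [harmonic_cast] at h1 h2
  constructor
  · rw [e]; linarith
  · have hlog : Real.log (n + 1) - Real.log n ≤ 1 / n := by
      rw [← Real.log_div (by positivity) hn0.ne']
      have h3 : ((n:ℝ)+1)/n - 1 = 1/n := by field_simp; ring
      linarith [Real.log_le_sub_one_of_pos (x := ((n:ℝ)+1)/n) (by positivity)]
    rw [e]; linarith

lemma e_le_one {n : ℕ} (hn : 1 ≤ n) : e n ≤ 1 := by
  have h2 := Real.strictAnti_eulerMascheroniSeq'.antitone hn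
  rw [Real.eulerMascheroniSeq', if_neg (by omega), Real.eulerMascheroniSeq'_one] at h2
  rw [e, ← harmonic_cast]
  exact h2

lemma tail_bound {n : ℕ} (hn : 1 ≤ n) :
    0 ≤ zeta 2 - pR 2 n ∧ zeta 2 - pR 2 n ≤ 1 / n := by
  have hs := summable_aux 2 le_rfl
  have key : zeta 2 - pR 2 n = ∑' i : ℕ, 1 / (((i + n : ℕ) : ℝ) + 1) ^ 2 := by
    rw [zeta, pR, ← Summable.sum_add_tsum_nat_add n hs]
    ring
  have hn1 : (1:ℝ) ≤ (n:ℝ) := by exact_mod_cast hn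
  have hpos : ∀ i : ℕ, (0:ℝ) < (i:ℝ) + (n:ℝ) := fun i => by positivity
  have key2 : zeta 2 - pR 2 n = ∑' i : ℕ, 1 / ((i : ℝ) + (n:ℝ) + 1) ^ 2 := by
    rw [key]; exact tsum_congr fun i => by norm_cast
  constructor
  · rw [key2]; exact tsum_nonneg fun i => by positivity
  · rw [key2]
    have hg : HasSum (fun i : ℕ => 1 / ((i:ℝ) + n) - 1 / ((i:ℝ) + n + 1)) (1 / n) := by
      rw [hasSum_iff_tendsto_nat_of_nonneg]
      · have heq : ∀ N, ∑ i ∈ Finset.range N, (1 / ((i:ℝ) + n) - 1 / ((i:ℝ) + n + 1))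
            = 1 / n - 1 / ((N:ℝ) + n) := by
          intro N
          have h := Finset.sum_range_sub' (f := fun i : ℕ => 1 / ((i:ℝ) + n)) N
          push_cast at h
          rw [show (1:ℝ)/(0 + (n:ℝ)) = 1/n by norm_num] at h
          rw [← h]
          exact Finset.sum_congr rfl fun i _ => by ring
        simp only [heq]
        have h0 : Tendsto (fun N : ℕ => 1 / ((N:ℝ) + n)) atTop (𝓝 0) :=
          tendsto_const_nhds.div_atTop
            (tendsto_atTop_add_const_right atTop (n:ℝ) tendsto_natCast_atTop_atTop)
        simpa using tendsto_const_nhds.sub h0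
      · intro i
        have h1 := hpos i
        have : 1 / ((i:ℝ) + n + 1) ≤ 1 / ((i:ℝ) + n) :=
          one_div_le_one_div_of_le h1 (by linarith)
        linarith
    calc ∑' i : ℕ, 1 / ((i:ℝ) + (n:ℝ) + 1) ^ 2
        ≤ ∑' i : ℕ, (1 / ((i:ℝ) + n) - 1 / ((i:ℝ) + n + 1)) := by
          apply Summable.tsum_le_tsum _ (by
            have := (summable_nat_add_iff n).mpr hs
            exact this.congr fun i => by push_cast; ring_nf) hg.summable
          intro i
          have h1 := hpos i
          rw [show 1 / ((i:ℝ) + n) - 1 / ((i:ℝ) + n + 1)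
              = 1 / (((i:ℝ) + n) * ((i:ℝ) + n + 1)) from by
            field_simp; ring]
          exact one_div_le_one_div_of_le (by positivity) (by nlinarith)
      _ = 1 / n := hg.tsum_eq

lemma H111_cast (n : ℕ) :
    (H [1, 1, 1] n : ℝ) = (pR 1 n ^ 3 - 3 * pR 1 n * pR 2 n + 2 * pR 3 n) / 6 := by
  have := congrArg (fun q : ℚ => (q : ℝ)) (H111 n)
  simp only [Rat.cast_mul, Rat.cast_ofNat, Rat.cast_add, Rat.cast_sub, Rat.cast_pow,
    p_cast] at this
  linarith

/-- `(log n)^2 / n → 0` and `log n / n → 0` (along ℕ). -/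
lemma tendsto_logpow_div (k : ℕ) :
    Tendsto (fun n : ℕ => Real.log n ^ k / n) atTop (𝓝 0) := by
  have := (Real.tendsto_pow_log_div_mul_add_atTop 1 0 k one_ne_zero).comp
    tendsto_natCast_atTop_atTop
  simpa [Function.comp_def] using this

end FinitePartAux

open FinitePartAux in
/-- finite part of the divergent harmonic sum `H_{1,1,1}`: the sequence
`H_{1,1,1}(n) − (1/6)(log n)³ − (γ/2)(log n)² − ((γ² − ζ(2))/2)·log n` converges as
`n → ∞`, with limit `(γ³ − 3·ζ(2)·γ + 2·ζ(3))/6`, where `γ` is the Euler–Mascheroni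
constant. -/
theorem finitePart_H_one_one_one :
    Filter.Tendsto
      (fun n : ℕ => (H [1, 1, 1] n : ℝ) - (1 / 6) * Real.log n ^ 3
        - (Real.eulerMascheroniConstant / 2) * Real.log n ^ 2
        - ((Real.eulerMascheroniConstant ^ 2 - zeta 2) / 2) * Real.log n)
      Filter.atTop
      (nhds ((Real.eulerMascheroniConstant ^ 3
        - 3 * zeta 2 * Real.eulerMascheroniConstant + 2 * zeta 3) / 6)) := by
  set γ := Real.eulerMascheroniConstant with hγ
  have hγ1 : γ < 1 := by
    have := Real.eulerMascheroniConstant_lt_two_thirds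
    linarith
  have hγ0 : 0 < γ := by
    have := Real.one_half_lt_eulerMascheroniConstant
    linarith
  have hfun : ∀ n : ℕ,
      (H [1, 1, 1] n : ℝ) - (1 / 6) * Real.log n ^ 3
        - (γ / 2) * Real.log n ^ 2 - ((γ ^ 2 - zeta 2) / 2) * Real.log n
      = (e n - γ) * Real.log n ^ 2 / 2
        + ((e n - γ) * (e n + γ) + (zeta 2 - pR 2 n)) * Real.log n / 2
        + (e n ^ 3 / 6 - e n * pR 2 n / 2 + pR 3 n / 3) := by
    intro n
    rw [H111_cast, e]
    ring
  have hA : Tendsto (fun n : ℕ => (e n - γ) * Real.log n ^ 2 / 2) atTop (𝓝 0) := by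
    apply squeeze_zero_norm' (a := fun n : ℕ => Real.log n ^ 2 / n)
    · filter_upwards [eventually_ge_atTop 1] with n hn
      have hb := e_sub_gamma_bounds hn
      have hL : 0 ≤ Real.log n := Real.log_natCast_nonneg n
      rw [Real.norm_eq_abs,
        abs_of_nonneg (div_nonneg (mul_nonneg hb.1 (sq_nonneg _)) (by norm_num))]
      have hn0 : (0:ℝ) < n := by exact_mod_cast hn
      calc (e n - γ) * Real.log n ^ 2 / 2 ≤ (1 / n) * Real.log n ^ 2 / 2 := by
            gcongr
            exact hb.2
        _ ≤ Real.log n ^ 2 / n := by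
            rw [show (1/(n:ℝ)) * Real.log n ^ 2 / 2 = Real.log n ^ 2 / n / 2 by ring]
            have : (0:ℝ) ≤ Real.log n ^ 2 / n := by positivity
            linarith
    · exact tendsto_logpow_div 2
  have hB : Tendsto (fun n : ℕ =>
      ((e n - γ) * (e n + γ) + (zeta 2 - pR 2 n)) * Real.log n / 2) atTop (𝓝 0) := by
    apply squeeze_zero_norm' (a := fun n : ℕ => 2 * (Real.log n ^ 1 / n))
    · filter_upwards [eventually_ge_atTop 1] with n hn
      have hb := e_sub_gamma_bounds hn
      have he1 := e_le_one hn
      have ht := tail_bound hn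
      have hL : 0 ≤ Real.log n := Real.log_natCast_nonneg n
      have hn0 : (0:ℝ) < n := by exact_mod_cast hn
      have heγ : (0:ℝ) ≤ e n + γ := by have := hb.1; simp only [hγ] at *; linarith
      rw [Real.norm_eq_abs, abs_of_nonneg (div_nonneg (mul_nonneg
        (add_nonneg (mul_nonneg hb.1 heγ) ht.1) hL) (by norm_num))]
      have hmain : (e n - γ) * (e n + γ) + (zeta 2 - pR 2 n) ≤ 3 / n := by
        have h1 : (e n - γ) * (e n + γ) ≤ (1 / n) * 2 := by
          apply mul_le_mul hb.2 (by linarith) (by linarith) (by positivity)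
        have := ht.2
        calc (e n - γ) * (e n + γ) + (zeta 2 - pR 2 n) ≤ (1/n) * 2 + 1/n := by linarith
          _ = 3 / n := by ring
      calc ((e n - γ) * (e n + γ) + (zeta 2 - pR 2 n)) * Real.log n / 2
          ≤ (3 / n) * Real.log n / 2 := by gcongr
        _ ≤ 2 * (Real.log n ^ 1 / n) := by
            rw [show (3/(n:ℝ)) * Real.log n / 2 = (3/2) * (Real.log n ^ 1 / n) by
              rw [pow_one]; ring]
            have : (0:ℝ) ≤ Real.log n ^ 1 / n := by positivity
            linarith
    · simpa using (tendsto_logpow_div 1).const_mul (2:ℝ)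
  have hC : Tendsto (fun n : ℕ => e n ^ 3 / 6 - e n * pR 2 n / 2 + pR 3 n / 3) atTop
      (𝓝 (γ ^ 3 / 6 - γ * zeta 2 / 2 + zeta 3 / 3)) :=
    (((tendsto_e.pow 3).div_const 6).sub
      ((tendsto_e.mul (tendsto_pR 2 le_rfl)).div_const 2)).add
      ((tendsto_pR 3 (by norm_num)).div_const 3)
  have := (hA.add hB).add hC
  rw [zero_add, zero_add] at this
  have hval : γ ^ 3 / 6 - γ * zeta 2 / 2 + zeta 3 / 3
      = (γ ^ 3 - 3 * zeta 2 * γ + 2 * zeta 3) / 6 := by ring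
  rw [hval] at this
  exact this.congr fun n => (hfun n).symm
end

section
/- ζ(3,1) = (1/10)·ζ(2)², i.e. Σ_{m>n>0} 1/(m³·n) = (1/10)·(Σ_{n≥1} 1/n²)². -/
open Finset Real Filter Topology

/-- The double zeta value `ζ(a,b) = Σ_{m>n>0} 1/(m^a·n^b)`. -/
noncomputable def dzeta (a b : ℕ) : ℝ :=
  ∑' p : {p : ℕ × ℕ // p.2 < p.1 ∧ 0 < p.2},
    (1 : ℝ) / ((p.1.1 : ℝ) ^ a * (p.1.2 : ℝ) ^ b)

namespace Z31

lemma summable_shift (p : ℕ) (hp : 2 ≤ p) : Summable (fun n : ℕ => (1:ℝ)/((n:ℝ)+1)^p) := by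
  have h := summable_one_div_nat_pow.mpr hp
  have h2 := (summable_nat_add_iff 1).mpr h
  exact h2.congr fun n => by push_cast; ring

lemma telescope (c : ℕ) :
    HasSum (fun m : ℕ => (1:ℝ)/((m:ℝ)+(c:ℝ)+1) - 1/((m:ℝ)+(c:ℝ)+2)) (1/((c:ℝ)+1)) := by
  set f : ℕ → ℝ := fun m => 1/((m:ℝ)+(c:ℝ)+1) with hf
  have key : ∀ m : ℕ, (1:ℝ)/((m:ℝ)+(c:ℝ)+1) - 1/((m:ℝ)+(c:ℝ)+2) = f m - f (m+1) := by
    intro m; simp only [hf]; push_cast; ring_nf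
  have hnn : ∀ m : ℕ, 0 ≤ f m - f (m+1) := by
    intro m; simp only [hf]
    rw [sub_nonneg]
    apply one_div_le_one_div_of_le (by positivity)
    push_cast; linarith
  have hps : ∀ n : ℕ, ∑ i ∈ range n, (f i - f (i+1)) = f 0 - f n :=
    fun n => Finset.sum_range_sub' f n
  have hsum : Summable (fun m => f m - f (m+1)) := by
    apply summable_of_sum_range_le hnn
    intro n; rw [hps]
    have : 0 ≤ f n := by simp only [hf]; positivity
    linarith
  have hlim : Tendsto f atTop (𝓝 0) := by
    have h1 : Tendsto (fun m : ℕ => (m:ℝ)+(c:ℝ)+1) atTop atTop := by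
      apply tendsto_atTop_add_const_right
      exact tendsto_natCast_atTop_atTop.atTop_add tendsto_const_nhds
    simpa only [hf, one_div, Pi.inv_def] using h1.inv_tendsto_atTop
  have ht : Tendsto (fun n => ∑ i ∈ range n, (f i - f (i+1))) atTop (𝓝 (f 0)) := by
    simp only [hps]
    simpa using tendsto_const_nhds.sub hlim
  have := tendsto_nhds_unique hsum.hasSum.tendsto_sum_nat ht
  have hf0 : f 0 = 1/((c:ℝ)+1) := by simp [hf]
  have := this ▸ hsum.hasSum
  rw [hf0] at this
  rw [show (fun m : ℕ => (1:ℝ)/((m:ℝ)+(c:ℝ)+1) - 1/((m:ℝ)+(c:ℝ)+2)) =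
      fun m => f m - f (m+1) from funext key]
  exact this

lemma inner_sum (n : ℕ) :
    HasSum (fun m : ℕ => (1:ℝ)/(((m:ℝ)+1)*((m:ℝ)+(n:ℝ)+2)))
      ((∑ j ∈ range (n+1), (1:ℝ)/((j:ℝ)+1))/((n:ℝ)+1)) := by
  have h : HasSum (fun m : ℕ => ∑ j ∈ range (n+1),
      ((1:ℝ)/((m:ℝ)+(j:ℝ)+1) - 1/((m:ℝ)+(j:ℝ)+2)))
      (∑ j ∈ range (n+1), (1:ℝ)/((j:ℝ)+1)) :=
    hasSum_sum fun j _ => telescope j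
  have h2 := h.div_const ((n:ℝ)+1)
  refine h2.congr_fun fun m => ?_
  have e1 : ∑ j ∈ range (n+1),
      ((1:ℝ)/((m:ℝ)+(j:ℝ)+1) - 1/((m:ℝ)+(j:ℝ)+2)) =
      1/((m:ℝ)+1) - 1/((m:ℝ)+(n:ℝ)+2) := by
    rw [show (∑ j ∈ range (n+1), ((1:ℝ)/((m:ℝ)+(j:ℝ)+1) - 1/((m:ℝ)+(j:ℝ)+2))) =
        ∑ j ∈ range (n+1), ((fun j : ℕ => (1:ℝ)/((m:ℝ)+(j:ℝ)+1)) j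
          - (fun j : ℕ => (1:ℝ)/((m:ℝ)+(j:ℝ)+1)) (j+1)) from
        Finset.sum_congr rfl fun j _ => by push_cast; ring_nf,
      Finset.sum_range_sub' (fun j : ℕ => (1:ℝ)/((m:ℝ)+(j:ℝ)+1)) (n+1)]
    push_cast; ring_nf
  rw [e1]
  have hm : ((m:ℝ)+1) ≠ 0 := by positivity
  have hmn : ((m:ℝ)+(n:ℝ)+2) ≠ 0 := by positivity
  have hn : ((n:ℝ)+1) ≠ 0 := by positivity
  field_simp
  ring

lemma hasSum_shift {a : ℝ} (p : ℕ) (hp : 0 < p)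
    (h : HasSum (fun n : ℕ => (1:ℝ) / (n:ℝ) ^ p) a) :
    HasSum (fun n : ℕ => (1:ℝ)/((n:ℝ)+1)^p) a := by
  have h2 := (hasSum_nat_add_iff' 1).mpr h
  simp only [Finset.range_one, Finset.sum_singleton, Nat.cast_zero] at h2
  rw [zero_pow hp.ne', div_zero, sub_zero] at h2
  exact h2.congr_fun fun n => by push_cast; ring_nf

lemma zeta_two_val : zeta 2 = π^2/6 :=
  (hasSum_shift 2 (by norm_num) hasSum_zeta_two).tsum_eq

lemma zeta_four_val : zeta 4 = π^4/90 :=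
  (hasSum_shift 4 (by norm_num) hasSum_zeta_four).tsum_eq

/-- `F1 (m-1, n-1) = 1/(m²n²)` -/
noncomputable def F1 (p : ℕ × ℕ) : ℝ := 1/(((p.1:ℝ)+1)^2*((p.2:ℝ)+1)^2)
/-- `F2 (m-1, n-1) = 1/(m²(m+n)²)` -/
noncomputable def F2 (p : ℕ × ℕ) : ℝ := 1/(((p.1:ℝ)+1)^2*((p.1:ℝ)+(p.2:ℝ)+2)^2)
/-- `F3 (m-1, n-1) = 1/(n²(m+n)²)` -/
noncomputable def F3 (p : ℕ × ℕ) : ℝ := 1/(((p.2:ℝ)+1)^2*((p.1:ℝ)+(p.2:ℝ)+2)^2)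
/-- `F4 (m-1, n-1) = 2/(n²m(m+n))` -/
noncomputable def F4 (p : ℕ × ℕ) : ℝ := 2/(((p.2:ℝ)+1)^2*((p.1:ℝ)+1)*((p.1:ℝ)+(p.2:ℝ)+2))
/-- `F5 (n-1, m-1) = 2/(n²m(m+n))` -/
noncomputable def F5 (p : ℕ × ℕ) : ℝ := 2/(((p.1:ℝ)+1)^2*((p.2:ℝ)+1)*((p.1:ℝ)+(p.2:ℝ)+2))

lemma SF1 : Summable F1 := by
  have := (summable_shift 2 le_rfl).mul_of_nonneg (summable_shift 2 le_rfl)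
    (fun n => by positivity) (fun n => by positivity)
  exact this.congr fun p => (one_div_mul_one_div _ _)

lemma SF2 : Summable F2 := by
  refine Summable.of_nonneg_of_le (fun p => by unfold F2; positivity) (fun p => ?_) SF1
  unfold F1 F2
  apply one_div_le_one_div_of_le (by positivity)
  have h1 : ((p.2:ℝ)+1)^2 ≤ ((p.1:ℝ)+(p.2:ℝ)+2)^2 := by
    apply pow_le_pow_left₀ (by positivity)
    have : (0:ℝ) ≤ (p.1:ℝ) := Nat.cast_nonneg _
    linarith
  have h2 : (0:ℝ) < ((p.1:ℝ)+1)^2 := by positivity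
  nlinarith

lemma SF3 : Summable F3 := by
  refine Summable.of_nonneg_of_le (fun p => by unfold F3; positivity) (fun p => ?_) SF1
  unfold F1 F3
  apply one_div_le_one_div_of_le (by positivity)
  have h1 : ((p.1:ℝ)+1)^2 ≤ ((p.1:ℝ)+(p.2:ℝ)+2)^2 := by
    apply pow_le_pow_left₀ (by positivity)
    have : (0:ℝ) ≤ (p.2:ℝ) := Nat.cast_nonneg _
    linarith
  have h2 : (0:ℝ) < ((p.2:ℝ)+1)^2 := by positivity
  nlinarith

lemma SF4 : Summable F4 := by
  refine Summable.of_nonneg_of_le (fun p => by unfold F4; positivity)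
    (fun p => ?_) (SF1.mul_left 2)
  unfold F1 F4
  rw [show (2:ℝ) * (1/(((p.1:ℝ)+1)^2*((p.2:ℝ)+1)^2)) =
    2/(((p.1:ℝ)+1)^2*((p.2:ℝ)+1)^2) by ring]
  apply div_le_div_of_nonneg_left (by norm_num) (by positivity)
  have h1 : ((p.1:ℝ)+1) ≤ ((p.1:ℝ)+(p.2:ℝ)+2) := by
    have : (0:ℝ) ≤ (p.2:ℝ) := Nat.cast_nonneg _
    linarith
  have h2 : (0:ℝ) < ((p.1:ℝ)+1) := by positivity
  have h3 : (0:ℝ) < ((p.2:ℝ)+1)^2 := by positivity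
  nlinarith [mul_le_mul_of_nonneg_left h1
    (by positivity : (0:ℝ) ≤ ((p.2:ℝ)+1)^2*((p.1:ℝ)+1))]

lemma SF5 : Summable F5 := by
  have := (Equiv.prodComm ℕ ℕ).summable_iff.mpr SF4
  exact this.congr fun p => by
    simp only [Function.comp, Equiv.prodComm_apply, Prod.swap, F4, F5]
    ring_nf

lemma key_identity (p : ℕ × ℕ) : F1 p + F3 p = F2 p + F4 p := by
  unfold F1 F2 F3 F4
  have h1 : ((p.1:ℝ)+1) ≠ 0 := by positivity
  have h2 : ((p.2:ℝ)+1) ≠ 0 := by positivity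
  have h3 : ((p.1:ℝ)+(p.2:ℝ)+2) ≠ 0 := by positivity
  field_simp
  ring

lemma tsum_F1 : ∑' p : ℕ × ℕ, F1 p = zeta 2 ^ 2 := by
  rw [Summable.tsum_prod SF1]
  have : ∀ a : ℕ, ∑' b : ℕ, F1 (a, b) =
      (1/((a:ℝ)+1)^2) * zeta 2 := by
    intro a
    rw [show zeta 2 = ∑' b : ℕ, (1:ℝ)/((b:ℝ)+1)^2 from rfl, ← tsum_mul_left]
    exact tsum_congr fun b => (one_div_mul_one_div _ _).symm
  rw [tsum_congr this, tsum_mul_right,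
    show (∑' a : ℕ, (1:ℝ)/((a:ℝ)+1)^2) = zeta 2 from rfl, sq]

lemma tsum_F3_eq_F2 : ∑' p : ℕ × ℕ, F3 p = ∑' p : ℕ × ℕ, F2 p := by
  rw [← (Equiv.prodComm ℕ ℕ).tsum_eq F2]
  exact tsum_congr fun p => by
    simp only [Equiv.prodComm_apply, Prod.swap, F2, F3]
    ring_nf

lemma tsum_F4_eq_F5 : ∑' p : ℕ × ℕ, F4 p = ∑' p : ℕ × ℕ, F5 p := by
  rw [← (Equiv.prodComm ℕ ℕ).tsum_eq F5]
  exact tsum_congr fun p => by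
    simp only [Equiv.prodComm_apply, Prod.swap, F4, F5]
    ring_nf

lemma tsum_F1_eq_F4 : ∑' p : ℕ × ℕ, F1 p = ∑' p : ℕ × ℕ, F4 p := by
  have h : ∑' p : ℕ × ℕ, (F1 p + F3 p) = ∑' p : ℕ × ℕ, (F2 p + F4 p) :=
    tsum_congr key_identity
  rw [Summable.tsum_add SF1 SF3, Summable.tsum_add SF2 SF4, tsum_F3_eq_F2] at h
  linarith

end Z31

namespace Z31

/-- partial harmonic-type sum -/
noncomputable def D (n : ℕ) : ℝ := ∑ j ∈ range n, 1/(((n:ℝ)+1)^3*((j:ℝ)+1))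

lemma D_nonneg (n : ℕ) : 0 ≤ D n := by
  unfold D; apply Finset.sum_nonneg; intro j _; positivity

lemma D_le (n : ℕ) : D n ≤ 1/((n:ℝ)+1)^2 := by
  unfold D
  calc ∑ j ∈ range n, 1/(((n:ℝ)+1)^3*((j:ℝ)+1))
      ≤ ∑ _j ∈ range n, 1/((n:ℝ)+1)^3 := by
        apply Finset.sum_le_sum
        intro j _
        apply one_div_le_one_div_of_le (by positivity)
        have : (1:ℝ) ≤ ((j:ℝ)+1) := by
          have : (0:ℝ) ≤ (j:ℝ) := Nat.cast_nonneg _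
          linarith
        nlinarith [pow_pos (show (0:ℝ) < (n:ℝ)+1 by positivity) 3]
    _ = (n:ℝ) * (1/((n:ℝ)+1)^3) := by
        rw [Finset.sum_const, card_range, nsmul_eq_mul]
    _ ≤ 1/((n:ℝ)+1)^2 := by
        rw [mul_one_div, div_le_div_iff₀ (by positivity) (by positivity)]
        have hx : (0:ℝ) ≤ (n:ℝ) := Nat.cast_nonneg _
        nlinarith [sq_nonneg ((n:ℝ)+1)]

lemma SD : Summable D :=
  Summable.of_nonneg_of_le D_nonneg D_le (summable_shift 2 le_rfl)

lemma inner_F5 (n : ℕ) : ∑' m : ℕ, F5 (n, m) =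
    2/((n:ℝ)+1)^4 + 2 * D n := by
  have h := (inner_sum n).mul_left (2/((n:ℝ)+1)^2)
  have h2 : ∀ m : ℕ, 2/((n:ℝ)+1)^2 * (1/(((m:ℝ)+1)*((m:ℝ)+(n:ℝ)+2))) = F5 (n, m) := by
    intro m; unfold F5; simp only
    have h1 : ((m:ℝ)+1) ≠ 0 := by positivity
    have h3 : ((n:ℝ)+(m:ℝ)+2) ≠ 0 := by positivity
    have h4 : ((n:ℝ)+1) ≠ 0 := by positivity
    rw [show ((m:ℝ)+(n:ℝ)+2) = ((n:ℝ)+(m:ℝ)+2) by ring]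
    field_simp
  rw [tsum_congr fun m => (h2 m).symm, tsum_mul_left, (inner_sum n).tsum_eq]
  rw [Finset.sum_range_succ]
  unfold D
  have h4 : ((n:ℝ)+1) ≠ 0 := by positivity
  rw [show (∑ j ∈ range n, 1/(((n:ℝ)+1)^3*((j:ℝ)+1))) =
      (1/((n:ℝ)+1)^3) * ∑ j ∈ range n, 1/((j:ℝ)+1) by
    rw [Finset.mul_sum]
    exact Finset.sum_congr rfl fun j _ => (one_div_mul_one_div _ _).symm]
  field_simp
  ring

end Z31

namespace Z31

lemma tsum_F5 : ∑' p : ℕ × ℕ, F5 p = 2 * zeta 4 + 2 * ∑' n : ℕ, D n := by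
  rw [Summable.tsum_prod SF5, tsum_congr inner_F5]
  have hA : Summable (fun n : ℕ => 2/((n:ℝ)+1)^4) :=
    ((summable_shift 4 (by norm_num)).mul_left 2).congr fun n => by ring
  have hB : Summable (fun n : ℕ => 2 * D n) := SD.mul_left 2
  rw [Summable.tsum_add hA hB, tsum_mul_left,
    show (∑' n : ℕ, 2/((n:ℝ)+1)^4) = 2 * zeta 4 by
      rw [show zeta 4 = ∑' n : ℕ, (1:ℝ)/((n:ℝ)+1)^4 from rfl, ← tsum_mul_left]
      exact tsum_congr fun n => by ring]

def e : (Σ n : ℕ, Fin n) ≃ {p : ℕ × ℕ // p.2 < p.1 ∧ 0 < p.2} where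
  toFun x := ⟨(x.1 + 1, (x.2 : ℕ) + 1), Nat.succ_lt_succ x.2.isLt, Nat.succ_pos _⟩
  invFun p := ⟨p.1.1 - 1, ⟨p.1.2 - 1, by obtain ⟨⟨a, b⟩, h1, h2⟩ := p; simp; omega⟩⟩
  left_inv := fun ⟨n, j⟩ => by
    apply Sigma.ext
    · simp
    · rw [Fin.heq_ext_iff (by simp)]
      simp
  right_inv := fun ⟨⟨a, b⟩, h1, h2⟩ => by
    apply Subtype.ext
    simp only [Prod.mk.injEq]
    omega

set_option maxHeartbeats 2000000 in
lemma dzeta_eq : dzeta 3 1 = ∑' n : ℕ, D n := by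
  classical
  set G : ℕ × ℕ → ℝ := fun p => if p.2 < p.1 then 1/((p.1:ℝ)^3 * (p.2:ℝ)) else 0 with hG
  have s1 : Summable (fun n : ℕ => (1:ℝ)/(n:ℝ)^2) := summable_one_div_nat_pow.mpr one_lt_two
  have SQ : Summable (fun p : ℕ × ℕ => ((1:ℝ)/(p.1:ℝ)^2) * ((1:ℝ)/(p.2:ℝ)^2)) :=
    s1.mul_of_nonneg s1 (fun n => by positivity) (fun n => by positivity)
  have SG : Summable G := by
    refine Summable.of_nonneg_of_le (fun p => ?_) (fun p => ?_) SQ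
    · simp only [hG]; split <;> positivity
    · simp only [hG]
      split
      · rename_i h
        rcases Nat.eq_zero_or_pos p.2 with h0 | h0
        · rw [h0]; push_cast
          rw [mul_zero, div_zero]
          positivity
        · have ha : (1:ℝ) ≤ (p.2:ℝ) := by exact_mod_cast h0
          have hb : (p.2:ℝ) < (p.1:ℝ) := by exact_mod_cast h
          have hb1 : (0:ℝ) < (p.2:ℝ) := by linarith
          have ha1 : (0:ℝ) < (p.1:ℝ) := by linarith
          rw [one_div_mul_one_div]
          apply one_div_le_one_div_of_le
            (mul_pos (pow_pos ha1 2) (pow_pos hb1 2))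
          nlinarith [mul_le_mul_of_nonneg_left hb.le
            (by positivity : (0:ℝ) ≤ (p.1:ℝ)^2*(p.2:ℝ))]
      · positivity
  have Ssub : Summable (fun x : {p : ℕ × ℕ // p.2 < p.1 ∧ 0 < p.2} =>
      (1:ℝ) / ((x.1.1:ℝ)^3 * (x.1.2:ℝ)^1)) := by
    have h := SG.comp_injective (Subtype.coe_injective :
      Function.Injective ((↑) : {p : ℕ × ℕ // p.2 < p.1 ∧ 0 < p.2} → ℕ × ℕ))
    refine h.congr fun x => ?_
    simp only [hG, Function.comp_apply]
    rw [if_pos x.2.1, pow_one]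
  have he := (e.tsum_eq (fun x : {p : ℕ × ℕ // p.2 < p.1 ∧ 0 < p.2} =>
      (1:ℝ) / ((x.1.1:ℝ)^3 * (x.1.2:ℝ)^1)))
  have hsig : Summable (fun y : Σ n : ℕ, Fin n =>
      (1:ℝ) / (((y.1:ℝ)+1)^3 * (((y.2:ℕ):ℝ)+1))) := by
    have h2 := e.summable_iff.mpr Ssub
    refine h2.congr fun y => ?_
    simp only [Function.comp_apply, e, Equiv.coe_fn_mk]
    push_cast
    ring_nf
  calc dzeta 3 1 = ∑' x : {p : ℕ × ℕ // p.2 < p.1 ∧ 0 < p.2},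
        (1:ℝ) / ((x.1.1:ℝ)^3 * (x.1.2:ℝ)^1) := rfl
    _ = ∑' y : Σ n : ℕ, Fin n,
        (1:ℝ) / (((y.1:ℝ)+1)^3 * (((y.2:ℕ):ℝ)+1)) := by
        rw [← he]
        refine tsum_congr fun y => ?_
        simp only [e, Equiv.coe_fn_mk]
        push_cast
        ring_nf
    _ = ∑' n : ℕ, ∑' j : Fin n, (1:ℝ) / (((n:ℝ)+1)^3 * (((j:ℕ):ℝ)+1)) := Summable.tsum_sigma hsig
    _ = ∑' n : ℕ, D n := by
        refine tsum_congr fun n => ?_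
        rw [tsum_fintype]
        unfold D
        rw [← Fin.sum_univ_eq_sum_range (fun j => (1:ℝ)/(((n:ℝ)+1)^3*((j:ℝ)+1))) n]

end Z31

/-- `ζ(3,1) = (1/10)·ζ(2)²`, i.e.
`Σ_{m>n>0} 1/(m³·n) = (1/10)·(Σ_{n≥1} 1/n²)²`. -/
theorem zeta_three_one_eq : dzeta 3 1 = (1 / 10) * zeta 2 ^ 2 := by
  have h1 : zeta 2 ^ 2 = 2 * zeta 4 + 2 * dzeta 3 1 := by
    rw [← Z31.tsum_F1, Z31.tsum_F1_eq_F4, Z31.tsum_F4_eq_F5, Z31.tsum_F5, Z31.dzeta_eq]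
  rw [Z31.zeta_two_val] at h1 ⊢
  rw [Z31.zeta_four_val] at h1
  ring_nf at h1 ⊢
  linarith
end

section
/- ζ(4,1) = 2·ζ(5) − ζ(2)·ζ(3), i.e. Σ_{m>n>0} 1/(m⁴·n) = 2·Σ_{n≥1} 1/n⁵ − (Σ_{n≥1} 1/n²)·(Σ_{n≥1} 1/n³). -/
namespace Z41

open Filter Finset



/-- 1-dimensional zeta-type summability. -/
lemma summable_aux (p : ℕ) (hp : 1 < p) :
    Summable (fun n : ℕ => (1:ℝ)/((n:ℝ)+1)^p) := by
  have h := (Real.summable_one_div_nat_pow (p := p)).mpr hp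
  have h2 := (summable_nat_add_iff (f := fun n : ℕ => (1:ℝ)/(n:ℝ)^p) 1).mpr h
  refine h2.congr (fun n => ?_)
  push_cast
  ring

lemma summable_base :
    Summable (fun q : ℕ×ℕ => (1:ℝ)/(((q.1:ℝ)+1)^2*((q.2:ℝ)+1)^2)) := by
  have := (summable_aux 2 one_lt_two).mul_of_nonneg (summable_aux 2 one_lt_two)
    (fun n => by positivity) (fun n => by positivity)
  refine this.congr (fun q => ?_)
  rw [div_mul_div_comm, one_mul]

lemma summable_of_denom (d : ℕ×ℕ → ℝ) (hd : ∀ q, 0 < d q)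
    (h : ∀ q, ((q.1:ℝ)+1)^2*((q.2:ℝ)+1)^2 ≤ d q) :
    Summable (fun q : ℕ×ℕ => 1 / d q) := by
  refine Summable.of_nonneg_of_le (fun q => ?_) (fun q => ?_) summable_base
  · have := hd q; positivity
  · have hpos : (0:ℝ) < ((q.1:ℝ)+1)^2*((q.2:ℝ)+1)^2 := by positivity
    exact one_div_le_one_div_of_le hpos (h q)

/-- telescoping: `Σ_j 1/((j+1)(j+k+2)) = H_{k+1}/(k+1)`. -/
lemma telescope (k : ℕ) :
    ∑' j : ℕ, (1:ℝ)/(((j:ℝ)+1)*((j:ℝ)+(k:ℝ)+2))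
      = (∑ i ∈ Finset.range (k+1), (1:ℝ)/((i:ℝ)+1))/((k:ℝ)+1) := by
  set H : ℝ := ∑ i ∈ Finset.range (k+1), (1:ℝ)/((i:ℝ)+1) with hH
  have hsum : Summable (fun j : ℕ => (1:ℝ)/(((j:ℝ)+1)*((j:ℝ)+(k:ℝ)+2))) := by
    refine Summable.of_nonneg_of_le (fun j => by positivity) (fun j => ?_)
      (summable_aux 2 one_lt_two)
    refine one_div_le_one_div_of_le (by positivity) ?_
    have hj : (0:ℝ) ≤ (j:ℝ) := Nat.cast_nonneg j
    have hk : (0:ℝ) ≤ (k:ℝ) := Nat.cast_nonneg k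
    nlinarith
  have key : ∀ N : ℕ, ∑ j ∈ Finset.range N, (1:ℝ)/(((j:ℝ)+1)*((j:ℝ)+(k:ℝ)+2))
      = (1/((k:ℝ)+1)) * (H - ∑ i ∈ Finset.range (k+1), (1:ℝ)/((N:ℝ)+(i:ℝ)+1)) := by
    intro N
    induction N with
    | zero =>
      simp only [Finset.range_zero, Finset.sum_empty, Nat.cast_zero]
      have : ∑ i ∈ Finset.range (k+1), (1:ℝ)/((0:ℝ)+(i:ℝ)+1) = H := by
        rw [hH]; exact Finset.sum_congr rfl (fun i _ => by ring_nf)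
      rw [this]; ring
    | succ N ih =>
      rw [Finset.sum_range_succ, ih]
      have hshift : ∑ i ∈ Finset.range (k+1), (1:ℝ)/((N:ℝ)+(i:ℝ)+1)
          - ∑ i ∈ Finset.range (k+1), (1:ℝ)/(((N+1:ℕ):ℝ)+(i:ℝ)+1)
          = 1/((N:ℝ)+1) - 1/((N:ℝ)+(k:ℝ)+2) := by
        have hts := Finset.sum_range_sub' (fun i : ℕ => (1:ℝ)/((N:ℝ)+(i:ℝ)+1)) (k+1)
        rw [← Finset.sum_sub_distrib]
        have : ∀ i ∈ Finset.range (k+1),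
            (1:ℝ)/((N:ℝ)+(i:ℝ)+1) - 1/(((N+1:ℕ):ℝ)+(i:ℝ)+1)
            = (1:ℝ)/((N:ℝ)+(i:ℝ)+1) - 1/((N:ℝ)+((i+1:ℕ):ℝ)+1) := by
          intro i _; push_cast; ring_nf
        rw [Finset.sum_congr rfl this, hts]
        push_cast; ring_nf
      have hN : (0:ℝ) ≤ (N:ℝ) := Nat.cast_nonneg N
      have hk : (0:ℝ) ≤ (k:ℝ) := Nat.cast_nonneg k
      have h1 : ((N:ℝ)+1) ≠ 0 := by positivity
      have h2 : ((N:ℝ)+(k:ℝ)+2) ≠ 0 := by positivity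
      have h3 : ((k:ℝ)+1) ≠ 0 := by positivity
      have : (1:ℝ)/(((N:ℝ)+1)*((N:ℝ)+(k:ℝ)+2))
          = (1/((k:ℝ)+1)) * (1/((N:ℝ)+1) - 1/((N:ℝ)+(k:ℝ)+2)) := by
        field_simp
        ring
      rw [this, ← hshift]
      ring
  refine ((hsum.hasSum_iff_tendsto_nat).mpr ?_).tsum_eq
  have htail : Tendsto (fun N : ℕ => ∑ i ∈ Finset.range (k+1), (1:ℝ)/((N:ℝ)+(i:ℝ)+1))
      atTop (nhds 0) := by
    have : Tendsto (fun N : ℕ => ∑ i ∈ Finset.range (k+1), (1:ℝ)/((N:ℝ)+(i:ℝ)+1))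
        atTop (nhds (∑ i ∈ Finset.range (k+1), (0:ℝ))) := by
      refine tendsto_finset_sum _ (fun i _ => ?_)
      have hbase : Tendsto (fun N : ℕ => ((N:ℝ)+(i:ℝ)+1)) atTop atTop := by
        apply tendsto_atTop_add_const_right
        apply tendsto_atTop_add_const_right
        exact tendsto_natCast_atTop_atTop (R := ℝ)
      simpa [Pi.inv_def] using hbase.inv_tendsto_atTop
    simpa using this
  have : Tendsto (fun N : ℕ => (1/((k:ℝ)+1)) *
      (H - ∑ i ∈ Finset.range (k+1), (1:ℝ)/((N:ℝ)+(i:ℝ)+1))) atTop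
      (nhds ((1/((k:ℝ)+1)) * (H - 0))) :=
    (tendsto_const_nhds.sub htail).const_mul _
  have h3 : ((k:ℝ)+1) ≠ 0 := by positivity
  have heq : (1/((k:ℝ)+1)) * (H - 0) = H/((k:ℝ)+1) := by ring
  rw [heq] at this
  exact Tendsto.congr (fun N => (key N).symm) this



/-! ### Basic functions on `ℕ × ℕ`; `u = q.1+1`, `v = q.2+1`, `m = u+v`. -/

noncomputable def fS' (q : ℕ×ℕ) : ℝ := 1/(((q.1:ℝ)+(q.2:ℝ)+2)^4*((q.2:ℝ)+1))
noncomputable def fA  (q : ℕ×ℕ) : ℝ :=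
  1/(((q.1:ℝ)+1)*((q.2:ℝ)+1)*((q.1:ℝ)+(q.2:ℝ)+2)^3)
noncomputable def fB  (q : ℕ×ℕ) : ℝ :=
  1/(((q.1:ℝ)+1)*((q.2:ℝ)+1)^2*((q.1:ℝ)+(q.2:ℝ)+2)^2)
noncomputable def fD  (q : ℕ×ℕ) : ℝ :=
  1/(((q.1:ℝ)+1)*((q.2:ℝ)+1)^3*((q.1:ℝ)+(q.2:ℝ)+2))
noncomputable def fDs (q : ℕ×ℕ) : ℝ :=
  1/(((q.1:ℝ)+1)^3*((q.2:ℝ)+1)*((q.1:ℝ)+(q.2:ℝ)+2))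
noncomputable def f32 (q : ℕ×ℕ) : ℝ := 1/(((q.2:ℝ)+1)^2*((q.1:ℝ)+(q.2:ℝ)+2)^3)
noncomputable def f23 (q : ℕ×ℕ) : ℝ := 1/(((q.2:ℝ)+1)^3*((q.1:ℝ)+(q.2:ℝ)+2)^2)



/-! ### Summability of all the auxiliary functions -/

lemma basic_facts (q : ℕ×ℕ) :
    (0:ℝ) ≤ (q.1:ℝ) ∧ (0:ℝ) ≤ (q.2:ℝ) := ⟨Nat.cast_nonneg _, Nat.cast_nonneg _⟩

lemma summable_fS' : Summable fS' := by
  refine summable_of_denom _ (fun q => by positivity) (fun q => ?_)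
  obtain ⟨hx, hy⟩ := basic_facts q
  set x := (q.1:ℝ); set y := (q.2:ℝ)
  have hm2 : (x+1)*(y+1) ≤ (x+y+2)^2 := by nlinarith
  have hsq : ((x+1)*(y+1))^2 ≤ ((x+y+2)^2)^2 :=
    pow_le_pow_left₀ (by positivity) hm2 2
  nlinarith [hsq, pow_nonneg (show (0:ℝ) ≤ x+y+2 by linarith) 4]

lemma summable_fA : Summable fA := by
  refine summable_of_denom _ (fun q => by positivity) (fun q => ?_)
  obtain ⟨hx, hy⟩ := basic_facts q
  set x := (q.1:ℝ); set y := (q.2:ℝ)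
  have hm3 : (x+1)*(y+1) ≤ (x+y+2)^3 := by
    have h2 : (x+1)*(y+1) ≤ (x+y+2)^2 := by nlinarith
    have h3 : (x+y+2)^2 ≤ (x+y+2)^3 := by
      nlinarith [mul_nonneg (sq_nonneg (x+y+2)) (show (0:ℝ) ≤ x+y+1 by linarith)]
    linarith
  nlinarith [mul_le_mul_of_nonneg_left hm3 (show (0:ℝ) ≤ (x+1)*(y+1) by positivity)]

lemma summable_fB : Summable fB := by
  refine summable_of_denom _ (fun q => by positivity) (fun q => ?_)
  obtain ⟨hx, hy⟩ := basic_facts q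
  set x := (q.1:ℝ); set y := (q.2:ℝ)
  have h1 : (x+1) ≤ (x+y+2)^2 := by nlinarith
  nlinarith [mul_le_mul_of_nonneg_left h1 (show (0:ℝ) ≤ (x+1)*(y+1)^2 by positivity)]

lemma summable_fD : Summable fD := by
  refine summable_of_denom _ (fun q => by positivity) (fun q => ?_)
  obtain ⟨hx, hy⟩ := basic_facts q
  set x := (q.1:ℝ); set y := (q.2:ℝ)
  have h1 : (x+1) ≤ (y+1)*(x+y+2) := by nlinarith
  nlinarith [mul_le_mul_of_nonneg_left h1 (show (0:ℝ) ≤ (x+1)*(y+1)^2 by positivity)]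

lemma summable_fDs : Summable fDs := by
  refine summable_of_denom _ (fun q => by positivity) (fun q => ?_)
  obtain ⟨hx, hy⟩ := basic_facts q
  set x := (q.1:ℝ); set y := (q.2:ℝ)
  have h1 : (y+1) ≤ (x+1)*(x+y+2) := by nlinarith
  nlinarith [mul_le_mul_of_nonneg_left h1 (show (0:ℝ) ≤ (x+1)^2*(y+1) by positivity)]

lemma summable_f32 : Summable f32 := by
  refine summable_of_denom _ (fun q => by positivity) (fun q => ?_)
  obtain ⟨hx, hy⟩ := basic_facts q
  set x := (q.1:ℝ); set y := (q.2:ℝ)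
  have h1 : (x+1)^2 ≤ (x+y+2)^3 := by
    have h2 : (x+1)^2 ≤ (x+y+2)^2 := by nlinarith
    have h3 : (x+y+2)^2 ≤ (x+y+2)^3 := by
      nlinarith [mul_nonneg (sq_nonneg (x+y+2)) (show (0:ℝ) ≤ x+y+1 by linarith)]
    linarith
  nlinarith [mul_le_mul_of_nonneg_left h1 (show (0:ℝ) ≤ (y+1)^2 by positivity)]

lemma summable_f23 : Summable f23 := by
  refine summable_of_denom _ (fun q => by positivity) (fun q => ?_)
  obtain ⟨hx, hy⟩ := basic_facts q
  set x := (q.1:ℝ); set y := (q.2:ℝ)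
  have h1 : (x+1)^2 ≤ (y+1)*(x+y+2)^2 := by nlinarith
  nlinarith [mul_le_mul_of_nonneg_left h1 (show (0:ℝ) ≤ (y+1)^2 by positivity)]



noncomputable def fS (q : ℕ×ℕ) : ℝ := 1/(((q.1:ℝ)+(q.2:ℝ)+2)^4*((q.1:ℝ)+1))

lemma summable_fS : Summable fS := by
  refine summable_of_denom _ (fun q => by positivity) (fun q => ?_)
  obtain ⟨hx, hy⟩ := basic_facts q
  set x := (q.1:ℝ); set y := (q.2:ℝ)
  have hm2 : (x+1)*(y+1) ≤ (x+y+2)^2 := by nlinarith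
  have hsq : ((x+1)*(y+1))^2 ≤ ((x+y+2)^2)^2 :=
    pow_le_pow_left₀ (by positivity) hm2 2
  nlinarith [hsq, pow_nonneg (show (0:ℝ) ≤ x+y+2 by linarith) 4]

lemma tsum_fS_eq_fS' : ∑' q, fS q = ∑' q, fS' q := by
  rw [← (Equiv.prodComm ℕ ℕ).tsum_eq fS']
  refine tsum_congr fun c => ?_
  simp only [Equiv.prodComm_apply, Prod.swap, fS, fS']
  rw [one_div, one_div]; congr 1; ring

/-! ### Pointwise partial-fraction identities -/

lemma eA : ∀ q : ℕ×ℕ, fA q = fS q + fS' q := by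
  intro q
  obtain ⟨hx, hy⟩ := basic_facts q
  set x := (q.1:ℝ); set y := (q.2:ℝ)
  simp only [fA, fS, fS']
  have h1 : x+1 ≠ 0 := by positivity
  have h2 : y+1 ≠ 0 := by positivity
  have h3 : x+y+2 ≠ 0 := by positivity
  field_simp
  ring

lemma eB : ∀ q : ℕ×ℕ, fB q = fA q + f32 q := by
  intro q
  obtain ⟨hx, hy⟩ := basic_facts q
  set x := (q.1:ℝ); set y := (q.2:ℝ)
  simp only [fB, fA, f32]
  have h1 : x+1 ≠ 0 := by positivity
  have h2 : y+1 ≠ 0 := by positivity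
  have h3 : x+y+2 ≠ 0 := by positivity
  field_simp
  ring

lemma eD : ∀ q : ℕ×ℕ, fD q = fB q + f23 q := by
  intro q
  obtain ⟨hx, hy⟩ := basic_facts q
  set x := (q.1:ℝ); set y := (q.2:ℝ)
  simp only [fD, fB, f23]
  have h1 : x+1 ≠ 0 := by positivity
  have h2 : y+1 ≠ 0 := by positivity
  have h3 : x+y+2 ≠ 0 := by positivity
  field_simp
  ring



/-! ### The stuffle product `ζ(2)ζ(3) = ζ(2,3) + ζ(3,2) + ζ(5)` -/

noncomputable def F (q : ℕ×ℕ) : ℝ := 1/((q.1:ℝ)+1)^2 * (1/((q.2:ℝ)+1)^3)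
noncomputable def F₁ (q : ℕ×ℕ) : ℝ := if q.1 < q.2 then F q else 0
noncomputable def F₂ (q : ℕ×ℕ) : ℝ := if q.2 < q.1 then F q else 0
noncomputable def F₃ (q : ℕ×ℕ) : ℝ := if q.1 = q.2 then F q else 0

lemma summable_F : Summable F := by
  have h := Summable.mul_of_nonneg (summable_aux 2 one_lt_two)
    (summable_aux 3 (by norm_num)) (fun n => by positivity) (fun n => by positivity)
  exact h.congr fun q => rfl

lemma F_nonneg (q : ℕ×ℕ) : 0 ≤ F q := by simp only [F]; positivity

lemma summable_ite_F (c : ℕ×ℕ → Prop) [DecidablePred c] :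
    Summable (fun q => if c q then F q else 0) := by
  refine Summable.of_nonneg_of_le (fun q => ?_) (fun q => ?_) summable_F
  · split_ifs
    · exact F_nonneg q
    · exact le_rfl
  · split_ifs
    · exact le_rfl
    · exact F_nonneg q

lemma summable_F₁ : Summable F₁ := summable_ite_F _
lemma summable_F₂ : Summable F₂ := summable_ite_F _
lemma summable_F₃ : Summable F₃ := summable_ite_F _

lemma tsum_F : ∑' q, F q = zeta 2 * zeta 3 := by
  rw [Summable.tsum_prod summable_F]
  have h1 : ∀ a : ℕ, ∑' b : ℕ, F (a, b) = 1/((a:ℝ)+1)^2 * zeta 3 := by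
    intro a
    simp only [F]
    rw [tsum_mul_left]
    rfl
  rw [tsum_congr h1, tsum_mul_right]
  rfl

lemma Fsplit : ∀ q : ℕ×ℕ, F q = F₁ q + F₂ q + F₃ q := by
  intro q
  simp only [F₁, F₂, F₃]
  rcases lt_trichotomy q.1 q.2 with h|h|h
  · rw [if_pos h, if_neg (by omega), if_neg (by omega)]; ring
  · rw [if_neg (by omega), if_neg (by omega), if_pos h]; ring
  · rw [if_neg (by omega), if_pos h, if_neg (by omega)]; ring

lemma tsum_F₁ : ∑' q, F₁ q = ∑' q, f32 q := by
  have hg : Function.Injective (fun c : ℕ×ℕ => ((c.2, c.1+c.2+1) : ℕ×ℕ)) := by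
    intro a b h
    simp only [Prod.mk.injEq] at h
    exact Prod.ext_iff.mpr ⟨by omega, by omega⟩
  have hsupp : Function.support F₁ ⊆ Set.range (fun c : ℕ×ℕ => ((c.2, c.1+c.2+1) : ℕ×ℕ)) := by
    intro q hq
    obtain ⟨q1, q2⟩ := q
    have hlt : q1 < q2 := by
      by_contra hc
      exact hq (by simp only [F₁, if_neg hc])
    exact ⟨(q2 - q1 - 1, q1), by simp only [Prod.mk.injEq, true_and, and_true]; omega⟩
  rw [← hg.tsum_eq hsupp]
  refine tsum_congr fun c => ?_
  have hc : c.2 < c.1+c.2+1 := by omega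
  simp only [F₁, F, if_pos hc, f32]
  rw [div_mul_div_comm, one_mul, one_div, one_div]
  congr 1
  push_cast
  ring

lemma tsum_F₂ : ∑' q, F₂ q = ∑' q, f23 q := by
  have hg : Function.Injective (fun c : ℕ×ℕ => ((c.1+c.2+1, c.2) : ℕ×ℕ)) := by
    intro a b h
    simp only [Prod.mk.injEq] at h
    exact Prod.ext_iff.mpr ⟨by omega, by omega⟩
  have hsupp : Function.support F₂ ⊆ Set.range (fun c : ℕ×ℕ => ((c.1+c.2+1, c.2) : ℕ×ℕ)) := by
    intro q hq
    obtain ⟨q1, q2⟩ := q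
    have hlt : q2 < q1 := by
      by_contra hc
      exact hq (by simp only [F₂, if_neg hc])
    exact ⟨(q1 - q2 - 1, q2), by simp only [Prod.mk.injEq, true_and, and_true]; omega⟩
  rw [← hg.tsum_eq hsupp]
  refine tsum_congr fun c => ?_
  have hc : c.2 < c.1+c.2+1 := by omega
  simp only [F₂, F, if_pos hc, f23]
  rw [div_mul_div_comm, one_mul, one_div, one_div]
  congr 1
  push_cast
  ring

lemma tsum_F₃ : ∑' q, F₃ q = zeta 5 := by
  have hg : Function.Injective (fun n : ℕ => ((n, n) : ℕ×ℕ)) := by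
    intro a b h
    simp only [Prod.mk.injEq] at h
    exact h.1
  have hsupp : Function.support F₃ ⊆ Set.range (fun n : ℕ => ((n, n) : ℕ×ℕ)) := by
    intro q hq
    obtain ⟨q1, q2⟩ := q
    have heq : q1 = q2 := by
      by_contra hc
      exact hq (by simp only [F₃, if_neg hc])
    exact ⟨q1, by simp only [Prod.mk.injEq, true_and, and_true]; omega⟩
  rw [← hg.tsum_eq hsupp]
  have : ∀ n : ℕ, F₃ (n, n) = 1/((n:ℝ)+1)^5 := by
    intro n
    simp only [F₃, F, if_true, eq_self_iff_true]
    rw [div_mul_div_comm, one_mul, one_div, one_div]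
    congr 1
    ring
  rw [tsum_congr this]
  rfl

lemma stuffle : zeta 2 * zeta 3 = (∑' q, f32 q) + (∑' q, f23 q) + zeta 5 := by
  rw [← tsum_F₁, ← tsum_F₂, ← tsum_F₃, ← tsum_F]
  rw [tsum_congr Fsplit]
  rw [Summable.tsum_add (summable_F₁.add summable_F₂) summable_F₃,
    Summable.tsum_add summable_F₁ summable_F₂]




/-! ### `Σ 1/(j k³ (j+k)) = ζ(4,1) + ζ(5)` via harmonic numbers -/

noncomputable def hlt (q : ℕ×ℕ) : ℝ :=
  if q.2 < q.1 then 1/(((q.1:ℝ)+1)^4*((q.2:ℝ)+1)) else 0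
noncomputable def hle (q : ℕ×ℕ) : ℝ :=
  if q.2 ≤ q.1 then 1/(((q.1:ℝ)+1)^4*((q.2:ℝ)+1)) else 0
noncomputable def hdg (q : ℕ×ℕ) : ℝ :=
  if q.1 = q.2 then 1/(((q.1:ℝ)+1)^4*((q.2:ℝ)+1)) else 0

lemma hbound (q : ℕ×ℕ) (hc : q.2 ≤ q.1) :
    (1:ℝ)/(((q.1:ℝ)+1)^4*((q.2:ℝ)+1)) ≤ 1/(((q.1:ℝ)+1)^2*((q.2:ℝ)+1)^2) := by
  obtain ⟨hx, hy⟩ := basic_facts q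
  refine one_div_le_one_div_of_le (by positivity) ?_
  have hyx : (q.2:ℝ) ≤ (q.1:ℝ) := Nat.cast_le.mpr hc
  set x := (q.1:ℝ); set y := (q.2:ℝ)
  have h1 : (y+1) ≤ (x+1)^2 := by nlinarith
  nlinarith [mul_le_mul_of_nonneg_left h1 (show (0:ℝ) ≤ (x+1)^2*(y+1) by positivity)]

lemma summable_hite (c : ℕ×ℕ → Prop) [DecidablePred c]
    (himp : ∀ q, c q → q.2 ≤ q.1) :
    Summable (fun q : ℕ×ℕ => if c q then 1/(((q.1:ℝ)+1)^4*((q.2:ℝ)+1)) else 0) := by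
  refine Summable.of_nonneg_of_le (fun q => ?_) (fun q => ?_) summable_base
  · split_ifs
    · positivity
    · exact le_rfl
  · split_ifs with hcq
    · exact hbound q (himp q hcq)
    · positivity

lemma summable_hlt : Summable hlt := summable_hite _ (fun q h => le_of_lt h)
lemma summable_hle : Summable hle := summable_hite _ (fun q h => h)
lemma summable_hdg : Summable hdg := summable_hite _ (fun q h => le_of_eq h.symm)

lemma hsplit : ∀ q : ℕ×ℕ, hle q = hlt q + hdg q := by
  intro q
  simp only [hle, hlt, hdg]
  rcases lt_trichotomy q.2 q.1 with h|h|h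
  · rw [if_pos (le_of_lt h), if_pos h, if_neg (by omega)]; ring
  · rw [if_pos (le_of_eq h), if_neg (by omega), if_pos h.symm]; ring
  · rw [if_neg (by omega), if_neg (by omega), if_neg (by omega)]; ring

lemma tsum_hlt : ∑' q, hlt q = ∑' q, fS' q := by
  have hg : Function.Injective (fun c : ℕ×ℕ => ((c.1+c.2+1, c.2) : ℕ×ℕ)) := by
    intro a b h
    simp only [Prod.mk.injEq] at h
    exact Prod.ext_iff.mpr ⟨by omega, by omega⟩
  have hsupp : Function.support hlt ⊆ Set.range (fun c : ℕ×ℕ => ((c.1+c.2+1, c.2) : ℕ×ℕ)) := by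
    intro q hq
    obtain ⟨q1, q2⟩ := q
    have hlt2 : q2 < q1 := by
      by_contra hc
      exact hq (by simp only [hlt, if_neg hc])
    exact ⟨(q1 - q2 - 1, q2), by simp only [Prod.mk.injEq, true_and, and_true]; omega⟩
  rw [← hg.tsum_eq hsupp]
  refine tsum_congr fun c => ?_
  have hc : c.2 < c.1+c.2+1 := by omega
  simp only [hlt, if_pos hc, fS']
  rw [one_div, one_div]
  congr 1
  push_cast
  ring

lemma tsum_hdg : ∑' q, hdg q = zeta 5 := by
  have hg : Function.Injective (fun n : ℕ => ((n, n) : ℕ×ℕ)) := by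
    intro a b h
    simp only [Prod.mk.injEq] at h
    exact h.1
  have hsupp : Function.support hdg ⊆ Set.range (fun n : ℕ => ((n, n) : ℕ×ℕ)) := by
    intro q hq
    obtain ⟨q1, q2⟩ := q
    have heq : q1 = q2 := by
      by_contra hc
      exact hq (by simp only [hdg, if_neg hc])
    exact ⟨q1, by simp only [Prod.mk.injEq, true_and, and_true]; omega⟩
  rw [← hg.tsum_eq hsupp]
  have key : ∀ n : ℕ, hdg (n, n) = 1/((n:ℝ)+1)^5 := by
    intro n
    simp only [hdg, if_true, eq_self_iff_true]
    rw [show ((n:ℝ)+1)^4*((n:ℝ)+1) = ((n:ℝ)+1)^5 by ring]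
  rw [tsum_congr key]
  rfl

lemma tsum_fD_eq : ∑' q, fD q = (∑' q, fS' q) + zeta 5 := by
  have h1 : ∑' q, fD q = ∑' q, fDs q := by
    rw [← (Equiv.prodComm ℕ ℕ).tsum_eq fD]
    refine tsum_congr fun c => ?_
    simp only [Equiv.prodComm_apply, Prod.swap, fD, fDs]
    rw [one_div, one_div]
    congr 1
    ring
  have h2 : ∑' q, fDs q = ∑' a : ℕ, ∑' b : ℕ, hle (a, b) := by
    rw [Summable.tsum_prod summable_fDs]
    refine tsum_congr fun a => ?_
    have e1 : ∀ b : ℕ, fDs (a, b)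
        = (1/((a:ℝ)+1)^3) * ((1:ℝ)/(((b:ℝ)+1)*((b:ℝ)+(a:ℝ)+2))) := by
      intro b
      simp only [fDs]
      rw [div_mul_div_comm, one_mul, one_div, one_div]
      congr 1
      ring
    rw [tsum_congr e1, tsum_mul_left, telescope a]
    have e2 : ∑' b : ℕ, hle (a, b)
        = ∑ b ∈ Finset.range (a+1), (1:ℝ)/(((a:ℝ)+1)^4*((b:ℝ)+1)) := by
      have e2a : ∑' b : ℕ, hle (a, b) = ∑ b ∈ Finset.range (a+1), hle (a, b) := by
        refine tsum_eq_sum fun b hb => ?_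
        simp only [Finset.mem_range] at hb
        simp only [hle]
        rw [if_neg (by omega)]
      rw [e2a]
      refine Finset.sum_congr rfl fun b hb => ?_
      simp only [Finset.mem_range] at hb
      simp only [hle]
      rw [if_pos (by omega)]
    rw [e2]
    have e3 : ∀ b ∈ Finset.range (a+1),
        (1:ℝ)/(((a:ℝ)+1)^4*((b:ℝ)+1)) = (1/((a:ℝ)+1)^4) * ((1:ℝ)/((b:ℝ)+1)) := by
      intro b _
      rw [div_mul_div_comm, one_mul]
    rw [Finset.sum_congr rfl e3, ← Finset.mul_sum]
    have ha : ((a:ℝ)+1) ≠ 0 := by positivity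
    field_simp
  have h3 : ∑' a : ℕ, ∑' b : ℕ, hle (a, b) = ∑' q, hle q := (Summable.tsum_prod summable_hle).symm
  have h4 : ∑' q, hle q = (∑' q, hlt q) + ∑' q, hdg q := by
    rw [tsum_congr hsplit]
    exact Summable.tsum_add summable_hlt summable_hdg
  rw [h1, h2, h3, h4, tsum_hlt, tsum_hdg]

/-! ### Identification of `dzeta 4 1` -/

def eqv : ℕ×ℕ ≃ {p : ℕ × ℕ // p.2 < p.1 ∧ 0 < p.2} where
  toFun c := ⟨(c.1+c.2+2, c.2+1), by omega, by omega⟩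
  invFun p := (p.1.1 - p.1.2 - 1, p.1.2 - 1)
  left_inv c := by
    obtain ⟨c1, c2⟩ := c
    simp only [Prod.mk.injEq]
    constructor <;> omega
  right_inv p := by
    obtain ⟨⟨p1, p2⟩, hp1, hp2⟩ := p
    simp only [Subtype.mk.injEq, Prod.mk.injEq]
    constructor <;> omega

lemma dzeta41 : dzeta 4 1 = ∑' q, fS' q := by
  unfold dzeta
  rw [← Equiv.tsum_eq eqv]
  refine tsum_congr fun c => ?_
  show (1:ℝ)/((((c.1+c.2+2:ℕ):ℝ))^4 * (((c.2+1:ℕ):ℝ))^1) = fS' c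
  simp only [fS']
  rw [one_div, one_div]
  congr 1
  push_cast
  ring

end Z41

/-- `ζ(4,1) = 2·ζ(5) − ζ(2)·ζ(3)`, i.e.
`Σ_{m>n>0} 1/(m⁴·n) = 2·Σ_{n≥1} 1/n⁵ − (Σ_{n≥1} 1/n²)·(Σ_{n≥1} 1/n³)`. -/
theorem zeta_four_one_eq : dzeta 4 1 = 2 * zeta 5 - zeta 2 * zeta 3 := by
  have hdz := Z41.dzeta41
  have tA : ∑' q, Z41.fA q = (∑' q, Z41.fS q) + ∑' q, Z41.fS' q := by
    rw [tsum_congr Z41.eA]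
    exact Summable.tsum_add Z41.summable_fS Z41.summable_fS'
  have hswap := Z41.tsum_fS_eq_fS'
  have tB : ∑' q, Z41.fB q = (∑' q, Z41.fA q) + ∑' q, Z41.f32 q := by
    rw [tsum_congr Z41.eB]
    exact Summable.tsum_add Z41.summable_fA Z41.summable_f32
  have tD : ∑' q, Z41.fD q = (∑' q, Z41.fB q) + ∑' q, Z41.f23 q := by
    rw [tsum_congr Z41.eD]
    exact Summable.tsum_add Z41.summable_fB Z41.summable_f23
  have tD2 := Z41.tsum_fD_eq
  have st := Z41.stuffle
  linarith
end
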